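/- arXiv:2006.13074 — 5 statements merged into one kernel-verified Lean document; each statement's English description precedes it below -/
import Mathlib

section
/- Let ∗ be the Hodge star operator on alternating 2-forms on ℝ⁴, i.e. the unique linear map on 2-forms satisfying β ∧ ∗α = ⟨β,α⟩ e¹²³⁴ for all 2-forms α, β, where the inner product on 2-forms makes {e^{ij} : 1 ≤ i < j ≤ 4} an orthonormal basis. Then for every M ∈ gl₄(ℝ) and every alternating 2-form α on ℝ⁴, ∗(θ(M)α) = −θ(Mᵗ)(∗α) − (tr M)·(∗α). -/
open scoped BigOperators

noncomputable section

/-- `Vn n` is `ℝⁿ`. -/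
abbrev Vn (n : ℕ) := Fin n → ℝ

/-- The space of alternating `k`-forms on `ℝⁿ`. -/
abbrev AltForm (n k : ℕ) := AlternatingMap ℝ (Vn n) ℝ (Fin k)

/-- The wedge product of alternating forms (determinant/shuffle convention, so that
`e¹ ∧ ⋯ ∧ eᵏ` evaluated at `(e₁, …, e_k)` gives `1`). -/
def wedge {n p q : ℕ} (α : AltForm n p) (β : AltForm n q) : AltForm n (p + q) :=
  ((LinearMap.mul' ℝ ℝ).compAlternatingMap (α.domCoprod β)).domDomCongr finSumFinEquiv

/-- A linear functional, viewed as a `1`-form. -/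
def oneForm {n : ℕ} (f : Vn n →ₗ[ℝ] ℝ) : AltForm n 1 :=
  AlternatingMap.ofSubsingleton ℝ (Vn n) ℝ (0 : Fin 1) f

/-- The basis `1`-form `e^{i+1}` on `ℝⁿ` (`0`-indexed: `ef i` is dual to the
standard basis vector `e_i`). -/
def ef {n : ℕ} (i : Fin n) : AltForm n 1 := oneForm (LinearMap.proj i)

/-- The inner product on alternating `k`-forms on `ℝⁿ` for which the basis
`{e^{i₁} ∧ ⋯ ∧ e^{i_k} : i₁ < ⋯ < i_k}` is orthonormal. -/
def formInner {n k : ℕ} (α β : AltForm n k) : ℝ :=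
  (1 / (Nat.factorial k : ℝ)) *
    ∑ v : Fin k → Fin n,
      α (fun m => Pi.single (v m) (1 : ℝ)) * β (fun m => Pi.single (v m) (1 : ℝ))

/-- `θ(f)` acting on alternating `2`-forms: `(θ(f)α)(u,v) = -α(f u, v) - α(u, f v)`. -/
def theta2 {n : ℕ} (f : Vn n →ₗ[ℝ] Vn n) (α : AltForm n 2) : AltForm n 2 where
  toMultilinearMap :=
    -(α.toMultilinearMap.compLinearMap ![f, LinearMap.id]
      + α.toMultilinearMap.compLinearMap ![LinearMap.id, f])
  map_eq_zero_of_eq' := by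
    intro v i j hv hij
    have key : ∀ u : Vn n, α ![f u, u] + α ![u, f u] = 0 := by
      intro u
      have hs : (![u, f u] ∘ ⇑(Equiv.swap (0 : Fin 2) 1)) = ![f u, u] := by
        funext k
        fin_cases k <;> simp [Equiv.swap_apply_left, Equiv.swap_apply_right]
      have := AlternatingMap.map_swap α ![u, f u] (i := 0) (j := 1) (by decide)
      rw [hs] at this
      linarith
    have h1 : (fun k : Fin 2 => (![f, LinearMap.id] k) (v k)) = ![f (v 0), v 1] := by
      funext k; fin_cases k <;> simp
    have h2 : (fun k : Fin 2 => (![LinearMap.id, f] k) (v k)) = ![v 0, f (v 1)] := by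
      funext k; fin_cases k <;> simp
    have hv01 : v 0 = v 1 := by
      fin_cases i <;> fin_cases j <;> first | exact hv | exact hv.symm | exact absurd rfl hij
    show -(α.toMultilinearMap.compLinearMap ![f, LinearMap.id]
      + α.toMultilinearMap.compLinearMap ![LinearMap.id, f]) v = 0
    simp only [MultilinearMap.neg_apply, MultilinearMap.add_apply,
      MultilinearMap.compLinearMap_apply]
    rw [h1, h2, hv01]
    have hk := key (v 1)
    simp only [AlternatingMap.coe_multilinearMap] at *
    linarith

@[simp] lemma theta2_apply {n : ℕ} (f : Vn n →ₗ[ℝ] Vn n) (α : AltForm n 2)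
    (v : Fin 2 → Vn n) :
    theta2 f α v = -α ![f (v 0), v 1] - α ![v 0, f (v 1)] := by
  have h1 : (fun k : Fin 2 => (![f, LinearMap.id] k) (v k)) = ![f (v 0), v 1] := by
    funext k; fin_cases k <;> simp
  have h2 : (fun k : Fin 2 => (![LinearMap.id, f] k) (v k)) = ![v 0, f (v 1)] := by
    funext k; fin_cases k <;> simp
  show -(α.toMultilinearMap.compLinearMap ![f, LinearMap.id]
      + α.toMultilinearMap.compLinearMap ![LinearMap.id, f]) v = _
  simp only [MultilinearMap.neg_apply, MultilinearMap.add_apply,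
    MultilinearMap.compLinearMap_apply]
  rw [h1, h2]
  ring_nf
  simp [AlternatingMap.toMultilinearMap]

/-- `θ(f)` acting on `1`-forms: `θ(f)α = -α ∘ f`. -/
def theta1 {n : ℕ} (f : Vn n →ₗ[ℝ] Vn n) (α : AltForm n 1) : AltForm n 1 :=
  -(α.compLinearMap f)

/-- A `4 × 4` matrix, embedded as a `7 × 7` matrix acting on
`g₁ = span{e₃,e₄,e₅,e₆} = span of coordinates 2,3,4,5` and by zero on the rest. -/
def mat47 (M : Matrix (Fin 4) (Fin 4) ℝ) : Matrix (Fin 7) (Fin 7) ℝ :=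
  Matrix.of fun i j =>
    if h : 2 ≤ (i : ℕ) ∧ (i : ℕ) ≤ 5 ∧ 2 ≤ (j : ℕ) ∧ (j : ℕ) ≤ 5 then
      M ⟨(i : ℕ) - 2, by omega⟩ ⟨(j : ℕ) - 2, by omega⟩
    else 0

/-- The linear endomorphism of `ℝ⁷` determined by `M ∈ gl₄(ℝ)` acting on `g₁` (with
`M e_j = Σᵢ m_{ij} e_i`) and by zero on `span{e₁,e₂,e₇}`. -/
def ext47 (M : Matrix (Fin 4) (Fin 4) ℝ) : Vn 7 →ₗ[ℝ] Vn 7 :=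
  (mat47 M).mulVecLin

/-- wedge of two basis 1-forms (0-indexed). -/
def w2 (i j : Fin 7) : AltForm 7 2 := wedge (ef i) (ef j)

def w3 (i j k : Fin 7) : AltForm 7 3 := wedge (w2 i j) (ef k)

def w4 (i j k l : Fin 7) : AltForm 7 4 := wedge (w3 i j k) (ef l)

def w5 (i j k l m : Fin 7) : AltForm 7 5 := wedge (w4 i j k l) (ef m)

/-- The volume form `e¹²³⁴⁵⁶⁷` on `ℝ⁷`. -/
def vol7 : AltForm 7 7 := wedge (wedge (w5 0 1 2 3 4) (ef 5)) (ef 6)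

/-- The volume form `e¹²³⁴` on `ℝ⁴`. -/
def vol4 : AltForm 4 4 :=
  wedge (wedge (wedge (ef (0 : Fin 4)) (ef 1)) (ef 2)) (ef 3)

/-- `ω₇ = e³⁴ + e⁵⁶` (0-indexed coordinates 2,3,4,5). -/
def om7 : AltForm 7 2 := w2 2 3 + w2 4 5
/-- `ω₁ = e³⁵ - e⁴⁶`. -/
def om1 : AltForm 7 2 := w2 2 4 - w2 3 5
/-- `ω₂ = -e³⁶ - e⁴⁵`. -/
def om2 : AltForm 7 2 := -w2 2 5 - w2 3 4

/-- The `G₂`-structure `φ = e¹²⁷ + e³⁴⁷ + e⁵⁶⁷ + e¹³⁵ - e¹⁴⁶ - e²³⁶ - e²⁴⁵`. -/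
def phiG2 : AltForm 7 3 :=
  w3 0 1 6 + w3 2 3 6 + w3 4 5 6 + w3 0 2 4 - w3 0 3 5 - w3 1 2 5 - w3 1 3 4

/-- `ψ = ∗φ = e³⁴⁵⁶ + ω₇ ∧ e¹² + ω₁ ∧ e²⁷ - ω₂ ∧ e¹⁷`. -/
def psiG2 : AltForm 7 4 :=
  w4 2 3 4 5 + wedge om7 (w2 0 1) + wedge om1 (w2 1 6) - wedge om2 (w2 0 6)

/-- The value of the Chevalley–Eilenberg differential of a `(k+1)`-form `α` on the Lie
algebra `(ℝ⁷, br)` at a tuple of `k+2` vectors: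
`dα(v₀,…,v_{k+1}) = Σ_{i<j} (-1)^{i+j} α([v_i,v_j], v₀, …, v̂ᵢ, …, v̂ⱼ, …)`. -/
def dAt {k : ℕ} (br : Vn 7 → Vn 7 → Vn 7) (α : AltForm 7 (k + 1))
    (v : Fin (k + 2) → Vn 7) : ℝ :=
  ∑ j : Fin (k + 2), ∑ i : Fin (k + 2),
    if h : (i : ℕ) < (j : ℕ) then
      (-1 : ℝ) ^ ((i : ℕ) + (j : ℕ)) *
        α (Fin.cons (br (v i) (v j))
            (Fin.removeNth (⟨(i : ℕ), by omega⟩ : Fin (k + 1)) (Fin.removeNth j v)))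
    else 0

/-- The projection `ℝ⁷ → g₁ ≃ ℝ⁴` onto the coordinates 2,3,4,5. -/
def proj1 (u : Vn 7) : Vn 4 := fun k => u ⟨(k : ℕ) + 2, by omega⟩

/-- The inclusion `ℝ⁴ ≃ g₁ ⊆ ℝ⁷` as the coordinates 2,3,4,5. -/
def emb1 (u : Vn 4) : Vn 7 := fun i =>
  if h : 2 ≤ (i : ℕ) ∧ (i : ℕ) ≤ 5 then u ⟨(i : ℕ) - 2, by omega⟩ else 0

/-- The skew-symmetric bilinear bracket on `ℝ⁷` of the Lie algebra `g_{A₁,A,B,C}`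
(with `e₁,…,e₇` the standard basis, `0`-indexed as `e₁ = e 0, …, e₇ = e 6`):
`[e₇,e₁] = x e₁ + y e₂`, `[e₇,e₂] = z e₁ + w e₂`, `[e₁,e₂] = 0`,
`[e₇,e_j] = A e_j`, `[e₁,e_j] = B e_j`, `[e₂,e_j] = C e_j` for `e_j ∈ g₁`,
and `g₁ = span{e₃,e₄,e₅,e₆}` abelian. -/
def brABC (x y z w : ℝ) (A B C : Matrix (Fin 4) (Fin 4) ℝ) (u v : Vn 7) : Vn 7 :=
  (u 6 * v 0 - u 0 * v 6) •
      (x • (Pi.single (0 : Fin 7) (1 : ℝ) : Vn 7) + y • (Pi.single (1 : Fin 7) (1 : ℝ) : Vn 7))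
  + (u 6 * v 1 - u 1 * v 6) •
      (z • (Pi.single (0 : Fin 7) (1 : ℝ) : Vn 7) + w • (Pi.single (1 : Fin 7) (1 : ℝ) : Vn 7))
  + emb1 (A.mulVec (u 6 • proj1 v - v 6 • proj1 u)
      + B.mulVec (u 0 • proj1 v - v 0 • proj1 u)
      + C.mulVec (u 1 • proj1 v - v 1 • proj1 u))

/-- The diagonal entries of `ad e₇` on the Lie algebra `g_s`. -/
def dS (s : ℝ) : Fin 7 → ℝ :=
  ![3 / 8 + s, -1 / 8 + s, 3 / 8 - s, -1 / 8 - s, 1 / 4, 3 / 4, 0]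

/-- The bracket of the solvable Lie algebra `g_s`: nonzero brackets
`[e₁,e₃] = -e₆`, `[e₁,e₄] = -e₅`, `[e₂,e₃] = -e₅`, `[e₇,eᵢ] = (A_s)ᵢᵢ eᵢ`, with
`A_s = diag(3/8+s, -1/8+s, 3/8-s, -1/8-s, 1/4, 3/4)` (`0`-indexed: `eᵢ = e (i-1)`). -/
def brG (s : ℝ) (u v : Vn 7) : Vn 7 :=
  (u 2 * v 0 - u 0 * v 2) • (Pi.single (5 : Fin 7) (1 : ℝ) : Vn 7)
  + (u 3 * v 0 - u 0 * v 3) • (Pi.single (4 : Fin 7) (1 : ℝ) : Vn 7)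
  + (u 2 * v 1 - u 1 * v 2) • (Pi.single (4 : Fin 7) (1 : ℝ) : Vn 7)
  + (fun i => dS s i * (u 6 * v i - u i * v 6) : Vn 7)

/-- The diagonal entries of `ad e₇` on the Lie algebra `s_a`. -/
def dA (a : ℝ) : Fin 7 → ℝ :=
  ![(1 + 4 * a) / 4, (1 + 4 * a) / 4, (1 - 4 * a) / 4, (1 - 4 * a) / 4, 1 / 2, 1 / 2, 0]

/-- The bracket of the solvable Lie algebra `s_a`: nonzero brackets
`[e₁,e₃] = -e₆`, `[e₁,e₄] = -e₅`, `[e₂,e₃] = -e₅`, `[e₂,e₄] = e₆`,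
`[e₇,eᵢ] = (A_a)ᵢᵢ eᵢ`, with `A_a = (1/4)diag(1+4a, 1+4a, 1-4a, 1-4a, 2, 2)`. -/
def brA (a : ℝ) (u v : Vn 7) : Vn 7 :=
  (u 2 * v 0 - u 0 * v 2) • (Pi.single (5 : Fin 7) (1 : ℝ) : Vn 7)
  + (u 3 * v 0 - u 0 * v 3) • (Pi.single (4 : Fin 7) (1 : ℝ) : Vn 7)
  + (u 2 * v 1 - u 1 * v 2) • (Pi.single (4 : Fin 7) (1 : ℝ) : Vn 7)
  + (u 1 * v 3 - u 3 * v 1) • (Pi.single (5 : Fin 7) (1 : ℝ) : Vn 7)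
  + (fun i => dA a i * (u 6 * v i - u i * v 6) : Vn 7)

/-- The diagonal linear operator on `ℝ⁷` with diagonal entries `d`. -/
def dOp (d : Fin 7 → ℝ) : Vn 7 →ₗ[ℝ] Vn 7 where
  toFun u := fun i => d i * u i
  map_add' u v := by funext i; simp [mul_add]
  map_smul' c u := by funext i; simp [Pi.smul_apply, smul_eq_mul]; ring

/-- The torsion `2`-form `τ_s = (5-8s)/4 e¹² + (5+8s)/4 e³⁴ - (5/2) e⁵⁶`
of the closed `G₂`-structure `φ` on `g_s`. -/
def tauS (s : ℝ) : AltForm 7 2 :=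
  ((5 - 8 * s) / 4) • w2 0 1 + ((5 + 8 * s) / 4) • w2 2 3 + (-(5 / 2)) • w2 4 5

/-- The functional `F = scal²/|Ric|²` on the family `(G_s, φ)`. -/
def Fq (s : ℝ) : ℝ := (75 + 64 * s ^ 2) ^ 2 / (1725 + 4224 * s ^ 2 + 4096 * s ^ 4)

section StarAux
open Equiv
open scoped TensorProduct

-- ==== aux ====
lemma wedge_apply {n p q : ℕ} (α : AltForm n p) (β : AltForm n q) (v : Fin (p+q) → Vn n) :
    ((p.factorial * q.factorial : ℕ) : ℝ) * wedge α β v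
      = ∑ σ : Equiv.Perm (Fin (p+q)), ((Equiv.Perm.sign σ : ℤ) : ℝ) *
          (α (fun i => v (σ (Fin.castAdd q i))) *
           β (fun j => v (σ (Fin.natAdd p j)))) := by
  have h := MultilinearMap.domCoprod_alternization_eq α β
  have h2 := congrArg (fun F : Vn n [⋀^(Fin p ⊕ Fin q)]→ₗ[ℝ] (ℝ ⊗[ℝ] ℝ) =>
    (LinearMap.mul' ℝ ℝ) (F (v ∘ ⇑finSumFinEquiv))) h
  simp only [MultilinearMap.alternatization_apply, AlternatingMap.smul_apply,
    MultilinearMap.domDomCongr_apply, MultilinearMap.domCoprod_apply, map_sum,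
    AlternatingMap.coe_multilinearMap, map_smul, LinearMap.mul'_apply,
    Fintype.card_fin] at h2
  rw [show (wedge α β) v = (LinearMap.mul' ℝ ℝ) ((AlternatingMap.domCoprod α β) (v ∘ ⇑finSumFinEquiv)) from rfl]
  rw [map_nsmul] at h2
  simp only [LinearMap.map_smul_of_tower, LinearMap.mul'_apply, nsmul_eq_mul] at h2
  push_cast at h2 ⊢
  rw [← h2]
  rw [← Fintype.sum_equiv (Equiv.permCongr finSumFinEquiv)
    (fun σ : Equiv.Perm (Fin p ⊕ Fin q) => ((Equiv.Perm.sign σ : ℤ) : ℝ) *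
      (α (fun i => (v ∘ ⇑finSumFinEquiv) (σ (Sum.inl i))) * β (fun j => (v ∘ ⇑finSumFinEquiv) (σ (Sum.inr j)))))]
  · exact Finset.sum_congr rfl fun σ _ => by rw [Units.smul_def, zsmul_eq_mul]
  · intro σ
    simp [Equiv.permCongr_apply, Equiv.Perm.sign_permCongr]

lemma ef_apply {n : ℕ} (i : Fin n) (v : Fin 1 → Vn n) : ef i v = v 0 i := rfl

lemma univ_perm2 : (Finset.univ : Finset (Equiv.Perm (Fin 2))) = {1, swap 0 1} := by decide

lemma wedge11 {n : ℕ} (a b : Fin n) (v : Fin 2 → Vn n) :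
    wedge (ef a) (ef b) v = v 0 a * v 1 b - v 0 b * v 1 a := by
  have h := wedge_apply (ef a) (ef b) v
  norm_num at h
  rw [univ_perm2] at h
  rw [Finset.sum_insert (by decide), Finset.sum_singleton] at h
  have e0 : Fin.castAdd 1 (0 : Fin 1) = (0 : Fin 2) := rfl
  have e1 : Fin.natAdd 1 (0 : Fin 1) = (1 : Fin 2) := rfl
  simp [ef_apply, e0, e1] at h
  linarith [h]

lemma univ_perm3 : (Finset.univ : Finset (Equiv.Perm (Fin 3))) =
    {1, swap 0 1, swap 0 2, swap 1 2, swap 0 1 * swap 1 2, swap 0 2 * swap 1 2} := by decide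

lemma univ_perm4 : (Finset.univ : Finset (Equiv.Perm (Fin 4))) =
    {1, swap (2:Fin 4) 3, swap (1:Fin 4) 2, swap (1:Fin 4) 2 * swap (2:Fin 4) 3,
     swap (1:Fin 4) 3 * swap (3:Fin 4) 2, swap (1:Fin 4) 3, swap (0:Fin 4) 1,
     swap (0:Fin 4) 1 * swap (2:Fin 4) 3, swap (0:Fin 4) 1 * swap (1:Fin 4) 2,
     swap (0:Fin 4) 1 * swap (1:Fin 4) 2 * swap (2:Fin 4) 3,
     swap (0:Fin 4) 1 * swap (1:Fin 4) 3 * swap (3:Fin 4) 2,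
     swap (0:Fin 4) 1 * swap (1:Fin 4) 3, swap (0:Fin 4) 2 * swap (2:Fin 4) 1,
     swap (0:Fin 4) 2 * swap (2:Fin 4) 3 * swap (3:Fin 4) 1, swap (0:Fin 4) 2,
     swap (0:Fin 4) 2 * swap (2:Fin 4) 3, swap (0:Fin 4) 2 * swap (1:Fin 4) 3,
     swap (0:Fin 4) 2 * swap (2:Fin 4) 1 * swap (1:Fin 4) 3,
     swap (0:Fin 4) 3 * swap (3:Fin 4) 2 * swap (2:Fin 4) 1,
     swap (0:Fin 4) 3 * swap (3:Fin 4) 1, swap (0:Fin 4) 3 * swap (3:Fin 4) 2,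
     swap (0:Fin 4) 3, swap (0:Fin 4) 3 * swap (3:Fin 4) 1 * swap (1:Fin 4) 2,
     swap (0:Fin 4) 3 * swap (1:Fin 4) 2} := by decide

lemma comp22l (v : Fin 4 → Vn 4) (σ : Equiv.Perm (Fin 4)) :
    (fun i : Fin 2 => v (σ (Fin.castAdd 2 i))) = ![v (σ 0), v (σ 1)] := by
  funext i; fin_cases i <;> rfl

lemma comp22r (v : Fin 4 → Vn 4) (σ : Equiv.Perm (Fin 4)) :
    (fun j : Fin 2 => v (σ (Fin.natAdd 2 j))) = ![v (σ 2), v (σ 3)] := by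
  funext i; fin_cases i <;> rfl

lemma comp31l (v : Fin 4 → Vn 4) (σ : Equiv.Perm (Fin 4)) :
    (fun i : Fin 3 => v (σ (Fin.castAdd 1 i))) = ![v (σ 0), v (σ 1), v (σ 2)] := by
  funext i; fin_cases i <;> rfl

lemma comp21l (v : Fin 3 → Vn 4) (σ : Equiv.Perm (Fin 3)) :
    (fun i : Fin 2 => v (σ (Fin.castAdd 1 i))) = ![v (σ 0), v (σ 1)] := by
  funext i; fin_cases i <;> rfl

lemma wedge22 (β γ : AltForm 4 2) (v : Fin 4 → Vn 4) :
    (4:ℝ) * wedge β γ v = ∑ σ : Equiv.Perm (Fin 4), ((Equiv.Perm.sign σ : ℤ) : ℝ) *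
      (β ![v (σ 0), v (σ 1)] * γ ![v (σ 2), v (σ 3)]) := by
  have h := wedge_apply β γ v
  simp only [comp22l, comp22r] at h
  norm_num at h
  convert h using 2 <;> norm_num

lemma wedge31 (β : AltForm 4 3) (c : Fin 4) (v : Fin 4 → Vn 4) :
    (6:ℝ) * wedge β (ef c) v = ∑ σ : Equiv.Perm (Fin 4), ((Equiv.Perm.sign σ : ℤ) : ℝ) *
      (β ![v (σ 0), v (σ 1), v (σ 2)] * v (σ (3:Fin 4)) c) := by
  have h := wedge_apply β (ef c) v
  have e3 : Fin.natAdd 3 (0 : Fin 1) = (3 : Fin 4) := rfl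
  simp only [comp31l, ef_apply, e3] at h
  norm_num at h
  convert h using 2 <;> norm_num

lemma wedge21 (β : AltForm 4 2) (c : Fin 4) (v : Fin 3 → Vn 4) :
    (2:ℝ) * wedge β (ef c) v = ∑ σ : Equiv.Perm (Fin 3), ((Equiv.Perm.sign σ : ℤ) : ℝ) *
      (β ![v (σ 0), v (σ 1)] * v (σ (2:Fin 3)) c) := by
  have h := wedge_apply β (ef c) v
  have e2 : Fin.natAdd 2 (0 : Fin 1) = (2 : Fin 3) := rfl
  simp only [comp21l, ef_apply, e2] at h
  norm_num at h
  convert h using 2 <;> norm_num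

def E (i : Fin 4) : Vn 4 := Pi.single i 1

lemma alt_swap (γ : AltForm 4 2) (u w : Vn 4) : γ ![w, u] = -γ ![u, w] := by
  have hs : (![u, w] ∘ ⇑(Equiv.swap (0 : Fin 2) 1)) = ![w, u] := by
    funext k; fin_cases k <;> simp [Equiv.swap_apply_left, Equiv.swap_apply_right]
  have h := AlternatingMap.map_swap γ ![u, w] (i := 0) (j := 1) (by decide)
  rw [hs] at h; exact h

lemma alt_same (γ : AltForm 4 2) (u : Vn 4) : γ ![u, u] = 0 :=
  γ.map_eq_zero_of_eq _ (show (![u,u] : Fin 2 → Vn 4) 0 = ![u,u] 1 from rfl) (by decide)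

lemma w3apply (u : Fin 3 → Vn 4) :
    wedge (wedge (ef (0:Fin 4)) (ef 1)) (ef 2) u =
      u 0 0 * u 1 1 * u 2 2 - u 0 0 * u 2 1 * u 1 2 - u 1 0 * u 0 1 * u 2 2
      + u 1 0 * u 2 1 * u 0 2 + u 2 0 * u 0 1 * u 1 2 - u 2 0 * u 1 1 * u 0 2 := by
  have h := wedge21 (wedge (ef (0:Fin 4)) (ef 1)) 2 u
  rw [univ_perm3, Finset.sum_insert (by decide), Finset.sum_insert (by decide), Finset.sum_insert (by decide), Finset.sum_insert (by decide), Finset.sum_insert (by decide), Finset.sum_singleton] at h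
  simp [wedge11, Equiv.Perm.mul_apply, Equiv.swap_apply_def] at h
  linarith [h]

lemma vol4E : vol4 ![E 0, E 1, E 2, E 3] = 1 := by
  have h := wedge31 (wedge (wedge (ef (0:Fin 4)) (ef 1)) (ef 2)) 3 ![E 0, E 1, E 2, E 3]
  rw [univ_perm4, Finset.sum_insert (by decide), Finset.sum_insert (by decide), Finset.sum_insert (by decide), Finset.sum_insert (by decide), Finset.sum_insert (by decide), Finset.sum_insert (by decide), Finset.sum_insert (by decide), Finset.sum_insert (by decide), Finset.sum_insert (by decide), Finset.sum_insert (by decide), Finset.sum_insert (by decide), Finset.sum_insert (by decide), Finset.sum_insert (by decide), Finset.sum_insert (by decide), Finset.sum_insert (by decide), Finset.sum_insert (by decide), Finset.sum_insert (by decide), Finset.sum_insert (by decide), Finset.sum_insert (by decide), Finset.sum_insert (by decide), Finset.sum_insert (by decide), Finset.sum_insert (by decide), Finset.sum_insert (by decide), Finset.sum_singleton] at h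
  simp [w3apply, Equiv.Perm.mul_apply, Equiv.swap_apply_def, E, Pi.single_apply] at h
  show wedge (wedge (wedge (ef (0:Fin 4)) (ef 1)) (ef 2)) (ef 3) ![E 0, E 1, E 2, E 3] = 1
  simp only [E]
  linarith [h]

lemma sgl (a b : Fin 4) : (fun m : Fin 2 => Pi.single (![a, b] m) (1:ℝ)) = ![E a, E b] := by
  funext m; fin_cases m <;> rfl

lemma sum_fn2 (F : (Fin 2 → Fin 4) → ℝ) : ∑ v, F v = ∑ a : Fin 4, ∑ b : Fin 4, F ![a, b] := by
  rw [show (∑ v, F v) = ∑ p : Fin 4 × Fin 4, F ![p.1, p.2] from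
    Fintype.sum_equiv (piFinTwoEquiv fun _ => Fin 4) _ _
      (fun v => by congr 1; funext i; fin_cases i <;> rfl)]
  exact Fintype.sum_prod_type (f := fun p : Fin 4 × Fin 4 => F ![p.1, p.2])

lemma key01 (γ : AltForm 4 2) :
    wedge (wedge (ef (0:Fin 4)) (ef 1)) γ ![E 0, E 1, E 2, E 3] = γ ![E 2, E 3] := by
  have h := wedge22 (wedge (ef (0:Fin 4)) (ef 1)) γ ![E 0, E 1, E 2, E 3]
  rw [univ_perm4, Finset.sum_insert (by decide), Finset.sum_insert (by decide), Finset.sum_insert (by decide), Finset.sum_insert (by decide), Finset.sum_insert (by decide), Finset.sum_insert (by decide), Finset.sum_insert (by decide), Finset.sum_insert (by decide), Finset.sum_insert (by decide), Finset.sum_insert (by decide), Finset.sum_insert (by decide), Finset.sum_insert (by decide), Finset.sum_insert (by decide), Finset.sum_insert (by decide), Finset.sum_insert (by decide), Finset.sum_insert (by decide), Finset.sum_insert (by decide), Finset.sum_insert (by decide), Finset.sum_insert (by decide), Finset.sum_insert (by decide), Finset.sum_insert (by decide), Finset.sum_insert (by decide), Finset.sum_insert (by decide), Finset.sum_singleton]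 at h
  simp [wedge11, Equiv.Perm.mul_apply, Equiv.swap_apply_def, E, Pi.single_apply] at h
  have hsw := alt_swap γ (E 2) (E 3)
  simp only [E] at hsw ⊢
  linarith [h, hsw]

lemma fi01 (γ : AltForm 4 2) :
    formInner (wedge (ef (0:Fin 4)) (ef 1)) γ = γ ![E 0, E 1] := by
  rw [formInner, sum_fn2]
  simp only [sgl]
  simp [wedge11, E, Pi.single_apply, Fin.sum_univ_four]
  have hsw := alt_swap γ (E 0) (E 1)
  simp only [E] at hsw
  linarith [hsw]

lemma key02 (γ : AltForm 4 2) :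
    wedge (wedge (ef (0:Fin 4)) (ef 2)) γ ![E 0, E 1, E 2, E 3] = -γ ![E 1, E 3] := by
  have h := wedge22 (wedge (ef (0:Fin 4)) (ef 2)) γ ![E 0, E 1, E 2, E 3]
  rw [univ_perm4, Finset.sum_insert (by decide), Finset.sum_insert (by decide), Finset.sum_insert (by decide), Finset.sum_insert (by decide), Finset.sum_insert (by decide), Finset.sum_insert (by decide), Finset.sum_insert (by decide), Finset.sum_insert (by decide), Finset.sum_insert (by decide), Finset.sum_insert (by decide), Finset.sum_insert (by decide), Finset.sum_insert (by decide), Finset.sum_insert (by decide), Finset.sum_insert (by decide), Finset.sum_insert (by decide), Finset.sum_insert (by decide), Finset.sum_insert (by decide), Finset.sum_insert (by decide), Finset.sum_insert (by decide), Finset.sum_insert (by decide), Finset.sum_insert (by decide), Finset.sum_insert (by decide), Finset.sum_insert (by decide), Finset.sum_singleton] at h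
  simp [wedge11, Equiv.Perm.mul_apply, Equiv.swap_apply_def, E, Pi.single_apply] at h
  have hsw := alt_swap γ (E 1) (E 3)
  simp only [E] at hsw ⊢
  linarith [h, hsw]

lemma fi02 (γ : AltForm 4 2) :
    formInner (wedge (ef (0:Fin 4)) (ef 2)) γ = γ ![E 0, E 2] := by
  rw [formInner, sum_fn2]
  simp only [sgl]
  simp [wedge11, E, Pi.single_apply, Fin.sum_univ_four]
  have hsw := alt_swap γ (E 0) (E 2)
  simp only [E] at hsw
  linarith [hsw]

lemma key03 (γ : AltForm 4 2) :
    wedge (wedge (ef (0:Fin 4)) (ef 3)) γ ![E 0, E 1, E 2, E 3] = γ ![E 1, E 2] := by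
  have h := wedge22 (wedge (ef (0:Fin 4)) (ef 3)) γ ![E 0, E 1, E 2, E 3]
  rw [univ_perm4, Finset.sum_insert (by decide), Finset.sum_insert (by decide), Finset.sum_insert (by decide), Finset.sum_insert (by decide), Finset.sum_insert (by decide), Finset.sum_insert (by decide), Finset.sum_insert (by decide), Finset.sum_insert (by decide), Finset.sum_insert (by decide), Finset.sum_insert (by decide), Finset.sum_insert (by decide), Finset.sum_insert (by decide), Finset.sum_insert (by decide), Finset.sum_insert (by decide), Finset.sum_insert (by decide), Finset.sum_insert (by decide), Finset.sum_insert (by decide), Finset.sum_insert (by decide), Finset.sum_insert (by decide), Finset.sum_insert (by decide), Finset.sum_insert (by decide), Finset.sum_insert (by decide), Finset.sum_insert (by decide), Finset.sum_singleton] at h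
  simp [wedge11, Equiv.Perm.mul_apply, Equiv.swap_apply_def, E, Pi.single_apply] at h
  have hsw := alt_swap γ (E 1) (E 2)
  simp only [E] at hsw ⊢
  linarith [h, hsw]

lemma fi03 (γ : AltForm 4 2) :
    formInner (wedge (ef (0:Fin 4)) (ef 3)) γ = γ ![E 0, E 3] := by
  rw [formInner, sum_fn2]
  simp only [sgl]
  simp [wedge11, E, Pi.single_apply, Fin.sum_univ_four]
  have hsw := alt_swap γ (E 0) (E 3)
  simp only [E] at hsw
  linarith [hsw]

lemma key12 (γ : AltForm 4 2) :
    wedge (wedge (ef (1:Fin 4)) (ef 2)) γ ![E 0, E 1, E 2, E 3] = γ ![E 0, E 3] := by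
  have h := wedge22 (wedge (ef (1:Fin 4)) (ef 2)) γ ![E 0, E 1, E 2, E 3]
  rw [univ_perm4, Finset.sum_insert (by decide), Finset.sum_insert (by decide), Finset.sum_insert (by decide), Finset.sum_insert (by decide), Finset.sum_insert (by decide), Finset.sum_insert (by decide), Finset.sum_insert (by decide), Finset.sum_insert (by decide), Finset.sum_insert (by decide), Finset.sum_insert (by decide), Finset.sum_insert (by decide), Finset.sum_insert (by decide), Finset.sum_insert (by decide), Finset.sum_insert (by decide), Finset.sum_insert (by decide), Finset.sum_insert (by decide), Finset.sum_insert (by decide), Finset.sum_insert (by decide), Finset.sum_insert (by decide), Finset.sum_insert (by decide), Finset.sum_insert (by decide), Finset.sum_insert (by decide), Finset.sum_insert (by decide), Finset.sum_singleton] at h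
  simp [wedge11, Equiv.Perm.mul_apply, Equiv.swap_apply_def, E, Pi.single_apply] at h
  have hsw := alt_swap γ (E 0) (E 3)
  simp only [E] at hsw ⊢
  linarith [h, hsw]

lemma fi12 (γ : AltForm 4 2) :
    formInner (wedge (ef (1:Fin 4)) (ef 2)) γ = γ ![E 1, E 2] := by
  rw [formInner, sum_fn2]
  simp only [sgl]
  simp [wedge11, E, Pi.single_apply, Fin.sum_univ_four]
  have hsw := alt_swap γ (E 1) (E 2)
  simp only [E] at hsw
  linarith [hsw]

lemma key13 (γ : AltForm 4 2) :
    wedge (wedge (ef (1:Fin 4)) (ef 3)) γ ![E 0, E 1, E 2, E 3] = -γ ![E 0, E 2] := by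
  have h := wedge22 (wedge (ef (1:Fin 4)) (ef 3)) γ ![E 0, E 1, E 2, E 3]
  rw [univ_perm4, Finset.sum_insert (by decide), Finset.sum_insert (by decide), Finset.sum_insert (by decide), Finset.sum_insert (by decide), Finset.sum_insert (by decide), Finset.sum_insert (by decide), Finset.sum_insert (by decide), Finset.sum_insert (by decide), Finset.sum_insert (by decide), Finset.sum_insert (by decide), Finset.sum_insert (by decide), Finset.sum_insert (by decide), Finset.sum_insert (by decide), Finset.sum_insert (by decide), Finset.sum_insert (by decide), Finset.sum_insert (by decide), Finset.sum_insert (by decide), Finset.sum_insert (by decide), Finset.sum_insert (by decide), Finset.sum_insert (by decide), Finset.sum_insert (by decide), Finset.sum_insert (by decide), Finset.sum_insert (by decide), Finset.sum_singleton] at h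
  simp [wedge11, Equiv.Perm.mul_apply, Equiv.swap_apply_def, E, Pi.single_apply] at h
  have hsw := alt_swap γ (E 0) (E 2)
  simp only [E] at hsw ⊢
  linarith [h, hsw]

lemma fi13 (γ : AltForm 4 2) :
    formInner (wedge (ef (1:Fin 4)) (ef 3)) γ = γ ![E 1, E 3] := by
  rw [formInner, sum_fn2]
  simp only [sgl]
  simp [wedge11, E, Pi.single_apply, Fin.sum_univ_four]
  have hsw := alt_swap γ (E 1) (E 3)
  simp only [E] at hsw
  linarith [hsw]

lemma key23 (γ : AltForm 4 2) :
    wedge (wedge (ef (2:Fin 4)) (ef 3)) γ ![E 0, E 1, E 2, E 3] = γ ![E 0, E 1] := by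
  have h := wedge22 (wedge (ef (2:Fin 4)) (ef 3)) γ ![E 0, E 1, E 2, E 3]
  rw [univ_perm4, Finset.sum_insert (by decide), Finset.sum_insert (by decide), Finset.sum_insert (by decide), Finset.sum_insert (by decide), Finset.sum_insert (by decide), Finset.sum_insert (by decide), Finset.sum_insert (by decide), Finset.sum_insert (by decide), Finset.sum_insert (by decide), Finset.sum_insert (by decide), Finset.sum_insert (by decide), Finset.sum_insert (by decide), Finset.sum_insert (by decide), Finset.sum_insert (by decide), Finset.sum_insert (by decide), Finset.sum_insert (by decide), Finset.sum_insert (by decide), Finset.sum_insert (by decide), Finset.sum_insert (by decide), Finset.sum_insert (by decide), Finset.sum_insert (by decide), Finset.sum_insert (by decide), Finset.sum_insert (by decide), Finset.sum_singleton] at h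
  simp [wedge11, Equiv.Perm.mul_apply, Equiv.swap_apply_def, E, Pi.single_apply] at h
  have hsw := alt_swap γ (E 0) (E 1)
  simp only [E] at hsw ⊢
  linarith [h, hsw]

lemma fi23 (γ : AltForm 4 2) :
    formInner (wedge (ef (2:Fin 4)) (ef 3)) γ = γ ![E 2, E 3] := by
  rw [formInner, sum_fn2]
  simp only [sgl]
  simp [wedge11, E, Pi.single_apply, Fin.sum_univ_four]
  have hsw := alt_swap γ (E 2) (E 3)
  simp only [E] at hsw
  linarith [hsw]

lemma starv01 (star : AltForm 4 2 →ₗ[ℝ] AltForm 4 2)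
    (hstar : ∀ α β : AltForm 4 2, wedge β (star α) = formInner β α • vol4)
    (γ : AltForm 4 2) : (star γ) ![E 2, E 3] = γ ![E 0, E 1] := by
  have h2 := congrArg (fun F : AltForm 4 4 => F ![E 0, E 1, E 2, E 3])
    (hstar γ (wedge (ef (0:Fin 4)) (ef 1)))
  simp only [AlternatingMap.smul_apply, smul_eq_mul] at h2
  rw [key01 (star γ), fi01 γ, vol4E, mul_one] at h2
  linarith [h2]

lemma starv02 (star : AltForm 4 2 →ₗ[ℝ] AltForm 4 2)
    (hstar : ∀ α β : AltForm 4 2, wedge β (star α) = formInner β α • vol4)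
    (γ : AltForm 4 2) : (star γ) ![E 1, E 3] = -γ ![E 0, E 2] := by
  have h2 := congrArg (fun F : AltForm 4 4 => F ![E 0, E 1, E 2, E 3])
    (hstar γ (wedge (ef (0:Fin 4)) (ef 2)))
  simp only [AlternatingMap.smul_apply, smul_eq_mul] at h2
  rw [key02 (star γ), fi02 γ, vol4E, mul_one] at h2
  linarith [h2]

lemma starv03 (star : AltForm 4 2 →ₗ[ℝ] AltForm 4 2)
    (hstar : ∀ α β : AltForm 4 2, wedge β (star α) = formInner β α • vol4)
    (γ : AltForm 4 2) : (star γ) ![E 1, E 2] = γ ![E 0, E 3] := by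
  have h2 := congrArg (fun F : AltForm 4 4 => F ![E 0, E 1, E 2, E 3])
    (hstar γ (wedge (ef (0:Fin 4)) (ef 3)))
  simp only [AlternatingMap.smul_apply, smul_eq_mul] at h2
  rw [key03 (star γ), fi03 γ, vol4E, mul_one] at h2
  linarith [h2]

lemma starv12 (star : AltForm 4 2 →ₗ[ℝ] AltForm 4 2)
    (hstar : ∀ α β : AltForm 4 2, wedge β (star α) = formInner β α • vol4)
    (γ : AltForm 4 2) : (star γ) ![E 0, E 3] = γ ![E 1, E 2] := by
  have h2 := congrArg (fun F : AltForm 4 4 => F ![E 0, E 1, E 2, E 3])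
    (hstar γ (wedge (ef (1:Fin 4)) (ef 2)))
  simp only [AlternatingMap.smul_apply, smul_eq_mul] at h2
  rw [key12 (star γ), fi12 γ, vol4E, mul_one] at h2
  linarith [h2]

lemma starv13 (star : AltForm 4 2 →ₗ[ℝ] AltForm 4 2)
    (hstar : ∀ α β : AltForm 4 2, wedge β (star α) = formInner β α • vol4)
    (γ : AltForm 4 2) : (star γ) ![E 0, E 2] = -γ ![E 1, E 3] := by
  have h2 := congrArg (fun F : AltForm 4 4 => F ![E 0, E 1, E 2, E 3])
    (hstar γ (wedge (ef (1:Fin 4)) (ef 3)))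
  simp only [AlternatingMap.smul_apply, smul_eq_mul] at h2
  rw [key13 (star γ), fi13 γ, vol4E, mul_one] at h2
  linarith [h2]

lemma starv23 (star : AltForm 4 2 →ₗ[ℝ] AltForm 4 2)
    (hstar : ∀ α β : AltForm 4 2, wedge β (star α) = formInner β α • vol4)
    (γ : AltForm 4 2) : (star γ) ![E 0, E 1] = γ ![E 2, E 3] := by
  have h2 := congrArg (fun F : AltForm 4 4 => F ![E 0, E 1, E 2, E 3])
    (hstar γ (wedge (ef (2:Fin 4)) (ef 3)))
  simp only [AlternatingMap.smul_apply, smul_eq_mul] at h2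
  rw [key23 (star γ), fi23 γ, vol4E, mul_one] at h2
  linarith [h2]

lemma star_table (star : AltForm 4 2 →ₗ[ℝ] AltForm 4 2)
    (hstar : ∀ α β : AltForm 4 2, wedge β (star α) = formInner β α • vol4)
    (γ : AltForm 4 2) : ∀ a b : Fin 4, (star γ) ![E a, E b] =
    ![![0, γ ![E 2, E 3], -γ ![E 1, E 3], γ ![E 1, E 2]],
      ![-γ ![E 2, E 3], 0, γ ![E 0, E 3], -γ ![E 0, E 2]],
      ![γ ![E 1, E 3], -γ ![E 0, E 3], 0, γ ![E 0, E 1]],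
      ![-γ ![E 1, E 2], γ ![E 0, E 2], -γ ![E 0, E 1], 0]] a b := by
  intro a b
  fin_cases a <;> fin_cases b <;> simp <;>
    first
    | exact alt_same (star γ) _
    | linarith [starv01 star hstar γ, starv02 star hstar γ, starv03 star hstar γ,
        starv12 star hstar γ, starv13 star hstar γ, starv23 star hstar γ,
        alt_swap (star γ) (E 0) (E 1), alt_swap (star γ) (E 0) (E 2),
        alt_swap (star γ) (E 0) (E 3), alt_swap (star γ) (E 1) (E 2),
        alt_swap (star γ) (E 1) (E 3), alt_swap (star γ) (E 2) (E 3)]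

lemma upd0 (w u X : Vn 4) : Function.update ![w, u] 0 X = ![X, u] := by
  funext i; fin_cases i <;> simp [Function.update]

lemma upd1 (w u X : Vn 4) : Function.update ![w, u] 1 X = ![w, X] := by
  funext i; fin_cases i <;> simp [Function.update]

lemma vec_expand (w : Vn 4) : w = ∑ a : Fin 4, w a • E a := by
  funext x
  rw [Finset.sum_apply]
  simp [E, Pi.single_apply]

lemma expand_fst (γ : AltForm 4 2) (w u : Vn 4) :
    γ ![w, u] = ∑ a : Fin 4, w a * γ ![E a, u] := by
  conv_lhs => rw [show (![w, u] : Fin 2 → Vn 4)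
    = Function.update ![w, u] 0 (∑ a : Fin 4, w a • E a) from by rw [← vec_expand w, upd0]]
  rw [show γ (Function.update ![w, u] 0 (∑ a : Fin 4, w a • E a))
      = γ.toMultilinearMap (Function.update ![w, u] 0 (∑ a : Fin 4, w a • E a)) from rfl,
    MultilinearMap.map_update_sum]
  refine Finset.sum_congr rfl fun a _ => ?_
  rw [show γ.toMultilinearMap (Function.update ![w, u] 0 (w a • E a))
      = γ (Function.update ![w, u] 0 (w a • E a)) from rfl,
    AlternatingMap.map_update_smul, upd0, smul_eq_mul]

lemma expand_snd (γ : AltForm 4 2) (w u : Vn 4) :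
    γ ![w, u] = ∑ a : Fin 4, u a * γ ![w, E a] := by
  conv_lhs => rw [show (![w, u] : Fin 2 → Vn 4)
    = Function.update ![w, u] 1 (∑ a : Fin 4, u a • E a) from by rw [← vec_expand u, upd1]]
  rw [show γ (Function.update ![w, u] 1 (∑ a : Fin 4, u a • E a))
      = γ.toMultilinearMap (Function.update ![w, u] 1 (∑ a : Fin 4, u a • E a)) from rfl,
    MultilinearMap.map_update_sum]
  refine Finset.sum_congr rfl fun a _ => ?_
  rw [show γ.toMultilinearMap (Function.update ![w, u] 1 (u a • E a))
      = γ (Function.update ![w, u] 1 (u a • E a)) from rfl,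
    AlternatingMap.map_update_smul, upd1, smul_eq_mul]

lemma theta_val (M : Matrix (Fin 4) (Fin 4) ℝ) (γ : AltForm 4 2) (a b : Fin 4) :
    theta2 M.mulVecLin γ ![E a, E b]
      = -(∑ m : Fin 4, M m a * γ ![E m, E b]) - ∑ m : Fin 4, M m b * γ ![E a, E m] := by
  rw [theta2_apply]
  have h0 : (![E a, E b] : Fin 2 → Vn 4) 0 = E a := rfl
  have h1 : (![E a, E b] : Fin 2 → Vn 4) 1 = E b := rfl
  rw [h0, h1]
  have hM : ∀ c : Fin 4, M.mulVecLin (E c) = fun m => M m c := by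
    intro c
    funext m
    simp [Matrix.mulVecLin_apply, E, Matrix.mulVec_single]
  rw [hM a, hM b, expand_fst γ _ (E b), expand_snd γ (E a) _]

lemma ext2 {γ δ : AltForm 4 2} (h : ∀ i j : Fin 4, γ ![E i, E j] = δ ![E i, E j]) :
    γ = δ := by
  refine Module.Basis.ext_alternating (Pi.basisFun ℝ (Fin 4)) fun v _ => ?_
  have e : (fun i : Fin 2 => (Pi.basisFun ℝ (Fin 4)) (v i)) = ![E (v 0), E (v 1)] := by
    funext i; fin_cases i <;> simp [Pi.basisFun_apply, E] <;> rfl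
  rw [e]
  exact h (v 0) (v 1)

lemma expand_colL (M : Matrix (Fin 4) (Fin 4) ℝ) (γ : AltForm 4 2) (c : Fin 4) (u : Vn 4) :
    γ ![M.mulVec (E c), u] = ∑ m : Fin 4, M m c * γ ![E m, u] := by
  rw [expand_fst γ _ u]
  refine Finset.sum_congr rfl fun m _ => ?_
  congr 1
  simp [E, Matrix.mulVec_single]

lemma expand_colR (M : Matrix (Fin 4) (Fin 4) ℝ) (γ : AltForm 4 2) (c : Fin 4) (u : Vn 4) :
    γ ![u, M.mulVec (E c)] = ∑ m : Fin 4, M m c * γ ![u, E m] := by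
  rw [expand_snd γ u]
  refine Finset.sum_congr rfl fun m _ => ?_
  congr 1
  simp [E, Matrix.mulVec_single]


end StarAux

set_option maxHeartbeats 2000000 in
/-- If `∗` is the Hodge star operator on alternating `2`-forms on `ℝ⁴`,
i.e. the (unique) linear map satisfying `β ∧ ∗α = ⟨β,α⟩ e¹²³⁴` for all `2`-forms `α, β`,
then `∗(θ(M)α) = -θ(Mᵗ)(∗α) - (tr M)·(∗α)` for every `M ∈ gl₄(ℝ)` and `2`-form `α`. -/
theorem star_theta2 (star : AltForm 4 2 →ₗ[ℝ] AltForm 4 2)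
    (hstar : ∀ α β : AltForm 4 2, wedge β (star α) = formInner β α • vol4)
    (M : Matrix (Fin 4) (Fin 4) ℝ) (α : AltForm 4 2) :
    star (theta2 M.mulVecLin α)
      = -theta2 (Matrix.mulVecLin M.transpose) (star α) - M.trace • star α := by
  have tv := star_table star hstar (theta2 M.mulVecLin α)
  have sv := star_table star hstar α
  have n10 : α ![E 1, E 0] = -α ![E 0, E 1] := alt_swap α (E 0) (E 1)
  have n20 : α ![E 2, E 0] = -α ![E 0, E 2] := alt_swap α (E 0) (E 2)
  have n30 : α ![E 3, E 0] = -α ![E 0, E 3] := alt_swap α (E 0) (E 3)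
  have n21 : α ![E 2, E 1] = -α ![E 1, E 2] := alt_swap α (E 1) (E 2)
  have n31 : α ![E 3, E 1] = -α ![E 1, E 3] := alt_swap α (E 1) (E 3)
  have n32 : α ![E 3, E 2] = -α ![E 2, E 3] := alt_swap α (E 2) (E 3)
  have nz : ∀ a : Fin 4, α ![E a, E a] = 0 := fun a => alt_same α (E a)
  have tr : M.trace = M 0 0 + M 1 1 + M 2 2 + M 3 3 := by
    simp [Matrix.trace, Matrix.diag, Fin.sum_univ_four]
  apply ext2
  intro i j
  simp only [AlternatingMap.sub_apply, AlternatingMap.neg_apply, AlternatingMap.smul_apply,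
    smul_eq_mul]
  rw [tv i j, theta_val M.transpose (star α) i j]
  fin_cases i <;> fin_cases j <;>
    simp [theta_val, expand_colL, expand_colR, Fin.sum_univ_four, Matrix.transpose_apply, sv, tr,
      n10, n20, n30, n21, n31, n32, nz] <;>
    ring
end
end

section
/- Fix real numbers x, y, z, w and matrices A, B, C ∈ gl₄(ℝ). The skew-symmetric bilinear bracket on ℝ⁷ defined by [e₇,e₁] = x e₁ + y e₂, [e₇,e₂] = z e₁ + w e₂, [e₁,e₂] = 0, [e₇,e_j] = Σ_{i=3}^{6} a_{ij} e_i, [e₁,e_j] = Σ_{i=3}^{6} b_{ij} e_i, [e₂,e_j] = Σ_{i=3}^{6} c_{ij} e_i for j ∈ {3,4,5,6}, and [e_i,e_j] = 0 for i,j ∈ {3,4,5,6}, satisfies the Jacobi identity if and only if [A,B] = xB + yC, [A,C] = zB + wC and [B,C] = 0 (matrix commutators). -/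
open scoped BigOperators

noncomputable section

section lems
variable (x y z w : ℝ) (A B C : Matrix (Fin 4) (Fin 4) ℝ) (u v t : Vn 7) (a : Vn 4)

lemma emb1_0 : emb1 a 0 = 0 := rfl
lemma emb1_1 : emb1 a 1 = 0 := rfl
lemma emb1_6 : emb1 a 6 = 0 := rfl
lemma emb1_2 : emb1 a 2 = a 0 := rfl
lemma emb1_3 : emb1 a 3 = a 1 := rfl
lemma emb1_4 : emb1 a 4 = a 2 := rfl
lemma emb1_5 : emb1 a 5 = a 3 := rfl


lemma proj1_emb1 : proj1 (emb1 a) = a := by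
  funext k; fin_cases k <;> rfl

lemma proj1_add (f g : Vn 7) : proj1 (f + g) = proj1 f + proj1 g := rfl

lemma proj1_e01 (c x y : ℝ) :
    proj1 (c • (x • (Pi.single (0 : Fin 7) (1 : ℝ) : Vn 7)
      + y • (Pi.single (1 : Fin 7) (1 : ℝ) : Vn 7))) = 0 := by
  funext k; fin_cases k <;> simp [proj1]

lemma br0 : brABC x y z w A B C u v 0
    = x * (u 6 * v 0 - u 0 * v 6) + z * (u 6 * v 1 - u 1 * v 6) := by
  simp [brABC, emb1_0, Pi.single_apply]; ring

lemma br1 : brABC x y z w A B C u v 1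
    = y * (u 6 * v 0 - u 0 * v 6) + w * (u 6 * v 1 - u 1 * v 6) := by
  simp [brABC, emb1_1, Pi.single_apply]; ring

lemma br6 : brABC x y z w A B C u v 6 = 0 := by
  simp [brABC, emb1_6, Pi.single_apply]

lemma proj1_br : proj1 (brABC x y z w A B C u v)
    = A.mulVec (u 6 • proj1 v - v 6 • proj1 u)
      + B.mulVec (u 0 • proj1 v - v 0 • proj1 u)
      + C.mulVec (u 1 • proj1 v - v 1 • proj1 u) := by
  rw [brABC, proj1_add, proj1_add, proj1_e01, proj1_e01, proj1_emb1, zero_add, zero_add]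


set_option maxHeartbeats 1000000 in
lemma proj1_J :
    proj1 (brABC x y z w A B C (brABC x y z w A B C u v) t
        + brABC x y z w A B C (brABC x y z w A B C v t) u
        + brABC x y z w A B C (brABC x y z w A B C t u) v)
    = (A * B - B * A - x • B - y • C).mulVec
          ((u 6 * t 0 - u 0 * t 6) • proj1 v + (v 6 * u 0 - v 0 * u 6) • proj1 t
            + (t 6 * v 0 - t 0 * v 6) • proj1 u)
      + (A * C - C * A - z • B - w • C).mulVec
          ((u 6 * t 1 - u 1 * t 6) • proj1 v + (v 6 * u 1 - v 1 * u 6) • proj1 t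
            + (t 6 * v 1 - t 1 * v 6) • proj1 u)
      + (B * C - C * B).mulVec
          ((u 0 * t 1 - u 1 * t 0) • proj1 v + (v 0 * u 1 - v 1 * u 0) • proj1 t
            + (t 0 * v 1 - t 1 * v 0) • proj1 u) := by
  rw [proj1_add, proj1_add]
  simp only [proj1_br, br0, br1, br6]
  funext k
  simp only [Matrix.mulVec, dotProduct, Fin.sum_univ_four, Matrix.mul_apply,
    Matrix.sub_apply, Matrix.add_apply, Matrix.smul_apply, Pi.add_apply, Pi.sub_apply,
    Pi.smul_apply, smul_eq_mul, Matrix.of_apply]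
  ring

end lems

lemma proj1_single6 : proj1 (Pi.single (6 : Fin 7) (1 : ℝ) : Vn 7) = 0 := by
  funext k; fin_cases k <;> simp [proj1, Pi.single_apply] <;> decide

lemma proj1_single0 : proj1 (Pi.single (0 : Fin 7) (1 : ℝ) : Vn 7) = 0 := by
  funext k; fin_cases k <;> simp [proj1, Pi.single_apply] <;> decide

lemma proj1_single1 : proj1 (Pi.single (1 : Fin 7) (1 : ℝ) : Vn 7) = 0 := by
  funext k; fin_cases k <;> simp [proj1, Pi.single_apply] <;> decide

lemma eq_zero_of (f : Vn 7) (h0 : f 0 = 0) (h1 : f 1 = 0) (h6 : f 6 = 0)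
    (hp : proj1 f = 0) : f = 0 := by
  funext i; fin_cases i
  · exact h0
  · exact h1
  · exact congrFun hp 0
  · exact congrFun hp 1
  · exact congrFun hp 2
  · exact congrFun hp 3
  · exact h6

/-- The skew-symmetric bilinear bracket on `ℝ⁷` determined by
`x, y, z, w ∈ ℝ` and `A, B, C ∈ gl₄(ℝ)` (as in `brABC`) satisfies the Jacobi identity
if and only if `[A,B] = xB + yC`, `[A,C] = zB + wC` and `[B,C] = 0`. -/
theorem jacobi_iff (x y z w : ℝ) (A B C : Matrix (Fin 4) (Fin 4) ℝ) :
    (∀ u v t : Vn 7,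
        brABC x y z w A B C (brABC x y z w A B C u v) t
        + brABC x y z w A B C (brABC x y z w A B C v t) u
        + brABC x y z w A B C (brABC x y z w A B C t u) v = 0)
    ↔ (A * B - B * A = x • B + y • C ∧ A * C - C * A = z • B + w • C
        ∧ B * C - C * B = 0) := by
  constructor
  · intro h
    have hJ : ∀ u v t : Vn 7,
        (A * B - B * A - x • B - y • C).mulVec
            ((u 6 * t 0 - u 0 * t 6) • proj1 v + (v 6 * u 0 - v 0 * u 6) • proj1 t
              + (t 6 * v 0 - t 0 * v 6) • proj1 u)
        + (A * C - C * A - z • B - w • C).mulVec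
            ((u 6 * t 1 - u 1 * t 6) • proj1 v + (v 6 * u 1 - v 1 * u 6) • proj1 t
              + (t 6 * v 1 - t 1 * v 6) • proj1 u)
        + (B * C - C * B).mulVec
            ((u 0 * t 1 - u 1 * t 0) • proj1 v + (v 0 * u 1 - v 1 * u 0) • proj1 t
              + (t 0 * v 1 - t 1 * v 0) • proj1 u) = 0 := by
      intro u v t
      rw [← proj1_J, h u v t]
      rfl
    have key : ∀ (M₁ M₂ M₃ : Matrix (Fin 4) (Fin 4) ℝ)
        (hm : ∀ a : Vn 4, M₁.mulVec a = 0), M₁ = 0 := by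
      intro M₁ M₂ M₃ hm
      ext i j
      simpa using congrFun (hm (Pi.single j 1)) i
    have e1 : A * B - B * A - x • B - y • C = 0 := by
      apply key _ (0:Matrix (Fin 4) (Fin 4) ℝ) 0
      intro a
      have := hJ (Pi.single 6 1) (emb1 a) (Pi.single 0 1)
      simpa [proj1_emb1, proj1_single6, proj1_single0, emb1_0, emb1_1, emb1_6,
        Pi.single_apply] using this
    have e2 : A * C - C * A - z • B - w • C = 0 := by
      apply key _ (0:Matrix (Fin 4) (Fin 4) ℝ) 0
      intro a
      have := hJ (Pi.single 6 1) (emb1 a) (Pi.single 1 1)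
      simpa [proj1_emb1, proj1_single6, proj1_single1, emb1_0, emb1_1, emb1_6,
        Pi.single_apply] using this
    have e3 : B * C - C * B = 0 := by
      apply key _ (0:Matrix (Fin 4) (Fin 4) ℝ) 0
      intro a
      have := hJ (Pi.single 0 1) (emb1 a) (Pi.single 1 1)
      simpa [proj1_emb1, proj1_single0, proj1_single1, emb1_0, emb1_1, emb1_6,
        Pi.single_apply] using this
    refine ⟨?_, ?_, e3⟩
    · rw [sub_sub] at e1; exact sub_eq_zero.mp e1
    · rw [sub_sub] at e2; exact sub_eq_zero.mp e2
  · rintro ⟨h1, h2, h3⟩ u v t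
    have e1 : A * B - B * A - x • B - y • C = 0 := by
      rw [sub_sub, h1, sub_self]
    have e2 : A * C - C * A - z • B - w • C = 0 := by
      rw [sub_sub, h2, sub_self]
    have hp : proj1 (brABC x y z w A B C (brABC x y z w A B C u v) t
        + brABC x y z w A B C (brABC x y z w A B C v t) u
        + brABC x y z w A B C (brABC x y z w A B C t u) v) = 0 := by
      rw [proj1_J, e1, e2, h3, Matrix.zero_mulVec, Matrix.zero_mulVec, Matrix.zero_mulVec]
      simp
    apply eq_zero_of _ _ _ _ hp
    · simp only [Pi.add_apply, br0, br1, br6]; ring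
    · simp only [Pi.add_apply, br0, br1, br6]; ring
    · simp only [Pi.add_apply, br6]; ring
end
end

section
/- For s ≥ 0, let R_s := (1/16)·diag(−25−24s, −5−24s, −25+24s, −5+24s, 10, −10, −15−64s²) be the Ricci operator of the left-invariant metric on G_s making e₁,…,e₇ orthonormal. There exists λ ∈ ℝ such that R_s − λ·id is a derivation of the Lie algebra g_s if and only if s = 5/8; in that case necessarily λ = −5/2, and R_{5/8} + (5/2)·id = (5/8)·diag(0, 2, 3, 5, 5, 3, 0). (Hence (G_s, ⟨·,·⟩) is a Ricci soliton if and only if s = 5/8, and it is then an expanding Ricci soliton.) -/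
open scoped BigOperators

noncomputable section

/-- The Ricci operator of the left-invariant metric on `G_s` making `e₁,…,e₇`
orthonormal. -/
def RicS (s : ℝ) : Vn 7 →ₗ[ℝ] Vn 7 :=
  dOp fun i =>
    (![-25 - 24 * s, -5 - 24 * s, -25 + 24 * s, -5 + 24 * s, 10, -10,
        -15 - 64 * s ^ 2] i) / 16


lemma vec7_5' (a b c d e f g : ℝ) : (![a,b,c,d,e,f,g]) 5 = f := rfl
lemma vec7_6' (a b c d e f g : ℝ) : (![a,b,c,d,e,f,g]) 6 = g := rfl

lemma gs_forward_aux (s : ℝ) (hs : 0 ≤ s) (lam : ℝ)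
    (h : ∀ u v : Vn 7,
        (RicS s - lam • (LinearMap.id : Vn 7 →ₗ[ℝ] Vn 7)) (brG s u v)
          = brG s ((RicS s - lam • (LinearMap.id : Vn 7 →ₗ[ℝ] Vn 7)) u) v
            + brG s u ((RicS s - lam • (LinearMap.id : Vn 7 →ₗ[ℝ] Vn 7)) v)) :
    s = 5 / 8 ∧ lam = -5 / 2 := by
  have e1 := congrFun (h (Pi.single (6 : Fin 7) 1) (Pi.single (4 : Fin 7) 1)) (4 : Fin 7)
  have e2 := congrFun (h (Pi.single (0 : Fin 7) 1) (Pi.single (2 : Fin 7) 1)) (5 : Fin 7)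
  simp [brG, dS, RicS, dOp, Pi.single_apply, vec7_5', vec7_6'] at e1 e2
  have hlam : lam = -5 / 2 := by nlinarith [e1, e2]
  have hsq : s ^ 2 = 25 / 64 := by nlinarith [e1, e2]
  have h58 : s = 5 / 8 := by nlinarith [sq_nonneg (s - 5/8), sq_nonneg (s + 5/8)]
  exact ⟨h58, hlam⟩

lemma gs_key : ∀ u v : Vn 7,
        (RicS (5/8) - (-5/2 : ℝ) • (LinearMap.id : Vn 7 →ₗ[ℝ] Vn 7)) (brG (5/8) u v)
          = brG (5/8) ((RicS (5/8) - (-5/2:ℝ) • (LinearMap.id : Vn 7 →ₗ[ℝ] Vn 7)) u) v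
            + brG (5/8) u ((RicS (5/8) - (-5/2:ℝ) • (LinearMap.id : Vn 7 →ₗ[ℝ] Vn 7)) v) := by
  intro u v
  funext i
  fin_cases i <;>
    simp [brG, dS, RicS, dOp, Pi.single_apply, vec7_5', vec7_6'] <;> ring

/-- For `s ≥ 0`, there is a `λ ∈ ℝ` with `Ric_s - λ·id` a derivation
of `g_s` if and only if `s = 5/8`; in that case necessarily `λ = -5/2`, and
`Ric_{5/8} + (5/2)id = (5/8)diag(0,2,3,5,5,3,0)`.  (Hence `(G_s, ⟨·,·⟩)` is a Ricci
soliton iff `s = 5/8`, and then an expanding one.) -/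
theorem gs_ricci_soliton (s : ℝ) (hs : 0 ≤ s) :
    ((∃ lam : ℝ, ∀ u v : Vn 7,
        (RicS s - lam • (LinearMap.id : Vn 7 →ₗ[ℝ] Vn 7)) (brG s u v)
          = brG s ((RicS s - lam • (LinearMap.id : Vn 7 →ₗ[ℝ] Vn 7)) u) v
            + brG s u ((RicS s - lam • (LinearMap.id : Vn 7 →ₗ[ℝ] Vn 7)) v)) ↔ s = 5 / 8)
    ∧ (∀ lam : ℝ,
        (∀ u v : Vn 7,
          (RicS s - lam • (LinearMap.id : Vn 7 →ₗ[ℝ] Vn 7)) (brG s u v)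
            = brG s ((RicS s - lam • (LinearMap.id : Vn 7 →ₗ[ℝ] Vn 7)) u) v
              + brG s u ((RicS s - lam • (LinearMap.id : Vn 7 →ₗ[ℝ] Vn 7)) v)) → lam = -5 / 2)
    ∧ RicS (5 / 8) + (5 / 2 : ℝ) • (LinearMap.id : Vn 7 →ₗ[ℝ] Vn 7)
        = dOp fun i => (5 / 8) * (![0, 2, 3, 5, 5, 3, 0] i) := by
  refine ⟨⟨fun ⟨lam, h⟩ => (gs_forward_aux s hs lam h).1, ?_⟩, fun lam h => (gs_forward_aux s hs lam h).2, ?_⟩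
  · rintro rfl
    exact ⟨-5/2, gs_key⟩
  · apply LinearMap.ext
    intro u
    funext i
    fin_cases i <;> simp [RicS, dOp, vec7_5', vec7_6'] <;> ring
end
end

section
/- For all real numbers a and s, the Lie algebras s_a and g_s are not isomorphic: there is no bijective linear map h : ℝ⁷ → ℝ⁷ with h[u,v]_{s_a} = [h(u), h(v)]_{g_s} for all u,v. -/
open scoped BigOperators

noncomputable section

section NotIso

lemma brA_apply' (a : ℝ) (u v : Vn 7) (i : Fin 7) :
    brA a u v i =
      (u 2 * v 0 - u 0 * v 2) * (Pi.single (5 : Fin 7) (1:ℝ) : Vn 7) i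
      + (u 3 * v 0 - u 0 * v 3) * (Pi.single (4 : Fin 7) (1:ℝ) : Vn 7) i
      + (u 2 * v 1 - u 1 * v 2) * (Pi.single (4 : Fin 7) (1:ℝ) : Vn 7) i
      + (u 1 * v 3 - u 3 * v 1) * (Pi.single (5 : Fin 7) (1:ℝ) : Vn 7) i
      + dA a i * (u 6 * v i - u i * v 6) := by
  simp [brA]

lemma brG_apply' (s : ℝ) (u v : Vn 7) (i : Fin 7) :
    brG s u v i =
      (u 2 * v 0 - u 0 * v 2) * (Pi.single (5 : Fin 7) (1:ℝ) : Vn 7) i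
      + (u 3 * v 0 - u 0 * v 3) * (Pi.single (4 : Fin 7) (1:ℝ) : Vn 7) i
      + (u 2 * v 1 - u 1 * v 2) * (Pi.single (4 : Fin 7) (1:ℝ) : Vn 7) i
      + dS s i * (u 6 * v i - u i * v 6) := by
  simp [brG]

lemma brA6' (a : ℝ) (u v : Vn 7) : brA a u v 6 = 0 := by
  rw [brA_apply']
  simp (config := { decide := true }) [Pi.single_apply, dA]

lemma brG6' (s : ℝ) (u v : Vn 7) : brG s u v 6 = 0 := by
  rw [brG_apply']
  simp (config := { decide := true }) [Pi.single_apply, dS]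

lemma brA_e4 (a : ℝ) (u : Vn 7) (c : ℝ) :
    brA a u (fun i => c * (Pi.single (4:Fin 7) (1:ℝ) : Vn 7) i)
      = fun i => (u 6 / 2 * c) * (Pi.single (4:Fin 7) (1:ℝ) : Vn 7) i := by
  funext i
  rw [brA_apply']
  fin_cases i <;>
    simp (config := { decide := true }) [dA, Pi.single_apply] <;> ring

lemma brG_e4 (s : ℝ) (u : Vn 7) (c : ℝ) :
    brG s u (fun i => c * (Pi.single (4:Fin 7) (1:ℝ) : Vn 7) i)
      = fun i => (u 6 / 4 * c) * (Pi.single (4:Fin 7) (1:ℝ) : Vn 7) i := by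
  funext i
  rw [brG_apply']
  fin_cases i <;>
    simp (config := { decide := true }) [dS, Pi.single_apply] <;> ring

lemma single4_one : (Pi.single (4:Fin 7) (1:ℝ) : Vn 7)
    = fun i => (1:ℝ) * (Pi.single (4:Fin 7) (1:ℝ) : Vn 7) i := by
  funext i; ring

lemma brA_cube_e4 (a : ℝ) (u : Vn 7) :
    brA a u (brA a u (brA a u (Pi.single 4 1)))
      = fun i => (u 6 / 2 * (u 6 / 2 * (u 6 / 2 * 1)))
          * (Pi.single (4:Fin 7) (1:ℝ) : Vn 7) i := by
  rw [single4_one, brA_e4, brA_e4, brA_e4]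
  funext i; simp

lemma brG_cube_e4 (s : ℝ) (u : Vn 7) :
    brG s u (brG s u (brG s u (Pi.single 4 1)))
      = fun i => (u 6 / 4 * (u 6 / 4 * (u 6 / 4 * 1)))
          * (Pi.single (4:Fin 7) (1:ℝ) : Vn 7) i := by
  rw [single4_one, brG_e4, brG_e4, brG_e4]
  funext i; simp

lemma brA_cube_zero (a : ℝ) {u : Vn 7} (hu : u 6 = 0) (v : Vn 7) :
    brA a u (brA a u (brA a u v)) = 0 := by
  have h2 : ∀ i : Fin 7, i ≠ 4 → i ≠ 5 → brA a u (brA a u v) i = 0 := by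
    intro i hi4 hi5
    rw [brA_apply']
    simp [Pi.single_apply, hi4, hi5, hu, brA6']
  funext i
  rw [brA_apply']
  simp [h2 0 (by decide) (by decide), h2 1 (by decide) (by decide),
    h2 2 (by decide) (by decide), h2 3 (by decide) (by decide), brA6', hu]

lemma brG_cube_zero (s : ℝ) {u : Vn 7} (hu : u 6 = 0) (v : Vn 7) :
    brG s u (brG s u (brG s u v)) = 0 := by
  have h2 : ∀ i : Fin 7, i ≠ 4 → i ≠ 5 → brG s u (brG s u v) i = 0 := by
    intro i hi4 hi5
    rw [brG_apply']
    simp [Pi.single_apply, hi4, hi5, hu, brG6']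
  funext i
  rw [brG_apply']
  simp [h2 0 (by decide) (by decide), h2 1 (by decide) (by decide),
    h2 2 (by decide) (by decide), h2 3 (by decide) (by decide), brG6', hu]

lemma brG_single1 (s : ℝ) (v : Vn 7) (hv : v 6 = 0) :
    brG s (Pi.single (1:Fin 7) (1:ℝ)) v
      = fun i => (-(v 2)) * (Pi.single (4:Fin 7) (1:ℝ) : Vn 7) i := by
  funext i
  rw [brG_apply']
  fin_cases i <;>
    simp (config := { decide := true }) [dS, Pi.single_apply, hv] <;> ring

end NotIso

/-- For all `a, s ∈ ℝ`, the Lie algebras `s_a` and `g_s` are not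
isomorphic: there is no bijective linear map `h : ℝ⁷ → ℝ⁷` with
`h[u,v]_{s_a} = [h(u), h(v)]_{g_s}` for all `u, v`. -/
theorem sa_not_isomorphic_gs (a s : ℝ) :
    ¬ ∃ h : Vn 7 →ₗ[ℝ] Vn 7,
        Function.Bijective h ∧ ∀ u v : Vn 7, h (brA a u v) = brG s (h u) (h v) := by
  rintro ⟨h, ⟨hinj, hsurj⟩, hbr⟩
  have hz : ∀ u : Vn 7, h u = 0 → u = 0 := fun u hu => hinj (by rw [hu, map_zero])
  -- h maps the complement of the nilradical outside the nilradical, and conversely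
  have hrev : ∀ y : Vn 7, (h y) 6 = 0 → y 6 = 0 := by
    intro y hy6
    have key : brA a y (brA a y (brA a y (Pi.single 4 1))) = 0 := by
      apply hz
      rw [hbr, hbr, hbr, brG_cube_zero s hy6]
    have key2 := brA_cube_e4 a y
    rw [key] at key2
    have t' : (0:ℝ) = (y 6 / 2 * (y 6 / 2 * (y 6 / 2 * 1)))
        * (Pi.single (4:Fin 7) (1:ℝ) : Vn 7) 4 := congrFun key2 4
    rw [Pi.single_eq_same] at t'
    have h3 : (y 6) ^ 3 = 0 := by linear_combination (-8:ℝ) * t'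
    exact pow_eq_zero_iff (by norm_num) |>.mp h3
  obtain ⟨p4, hp4⟩ := hsurj (Pi.single 4 1)
  have hfwd : ∀ y : Vn 7, y 6 = 0 → (h y) 6 = 0 := by
    intro y hy6
    have key : h (brA a y (brA a y (brA a y p4)))
        = fun i => ((h y) 6 / 4 * ((h y) 6 / 4 * ((h y) 6 / 4 * 1)))
            * (Pi.single (4:Fin 7) (1:ℝ) : Vn 7) i := by
      rw [hbr, hbr, hbr, hp4, brG_cube_e4]
    rw [brA_cube_zero a hy6, map_zero] at key
    have t' : (0:ℝ) = ((h y) 6 / 4 * ((h y) 6 / 4 * ((h y) 6 / 4 * 1)))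
        * (Pi.single (4:Fin 7) (1:ℝ) : Vn 7) 4 := congrFun key 4
    rw [Pi.single_eq_same] at t'
    have h3 : ((h y) 6) ^ 3 = 0 := by linear_combination (-64:ℝ) * t'
    exact pow_eq_zero_iff (by norm_num) |>.mp h3
  obtain ⟨x, hx⟩ := hsurj (Pi.single 1 1)
  have hx6 : x 6 = 0 := hrev x (by
    rw [hx]; simp (config := { decide := true }) [Pi.single_apply])
  by_cases h01 : x 0 = 0 ∧ x 1 = 0
  · by_cases h23 : x 2 = 0 ∧ x 3 = 0
    · -- x is central in the nilradical of s_a, but h x = e₂ is not central in that of g_s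
      obtain ⟨y2, hy2⟩ := hsurj (Pi.single 2 1)
      have hy26 : y2 6 = 0 := hrev y2 (by
        rw [hy2]; simp (config := { decide := true }) [Pi.single_apply])
      have hbz : brA a x y2 = 0 := by
        funext i
        rw [brA_apply']
        simp [h01.1, h01.2, h23.1, h23.2, hx6, hy26]
      have hcon : brG s (Pi.single 1 1) (Pi.single 2 1) = 0 := by
        rw [← hx, ← hy2, ← hbr, hbz, map_zero]
      have h4 := congrFun hcon 4
      rw [brG_apply'] at h4
      simp (config := { decide := true }) [Pi.single_apply, dS] at h4
    · -- x has nonzero component in span{e₃,e₄}: bracket with e₁, e₂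
      obtain ⟨c, hc⟩ : ∃ c : ℝ, c = -((h (Pi.single 0 1)) 2) := ⟨_, rfl⟩
      obtain ⟨c', hc'⟩ : ∃ c' : ℝ, c' = -((h (Pi.single 1 1)) 2) := ⟨_, rfl⟩
      have h06 : (h (Pi.single 0 1)) 6 = 0 := hfwd _ (by
        simp (config := { decide := true }) [Pi.single_apply])
      have h16 : (h (Pi.single 1 1)) 6 = 0 := hfwd _ (by
        simp (config := { decide := true }) [Pi.single_apply])
      have hw : h (brA a x (Pi.single 0 1))
          = fun i => c * (Pi.single (4:Fin 7) (1:ℝ) : Vn 7) i := by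
        rw [hbr, hx, brG_single1 s _ h06, hc]
      have hw' : h (brA a x (Pi.single 1 1))
          = fun i => c' * (Pi.single (4:Fin 7) (1:ℝ) : Vn 7) i := by
        rw [hbr, hx, brG_single1 s _ h16, hc']
      have hcomb : c' • brA a x (Pi.single 0 1) - c • brA a x (Pi.single 1 1) = 0 := by
        apply hz
        rw [map_sub, map_smul, map_smul, hw, hw']
        funext i
        simp only [Pi.sub_apply, Pi.smul_apply, smul_eq_mul, Pi.zero_apply]
        ring
      have hveq : c' • brA a x (Pi.single 0 1) = c • brA a x (Pi.single 1 1) :=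
        sub_eq_zero.mp hcomb
      have b04 : brA a x (Pi.single 0 1) 4 = x 3 := by
        rw [brA_apply']; simp (config := { decide := true }) [Pi.single_apply, dA]
      have b05 : brA a x (Pi.single 0 1) 5 = x 2 := by
        rw [brA_apply']; simp (config := { decide := true }) [Pi.single_apply, dA]
      have b14 : brA a x (Pi.single 1 1) 4 = x 2 := by
        rw [brA_apply']; simp (config := { decide := true }) [Pi.single_apply, dA]
      have b15 : brA a x (Pi.single 1 1) 5 = -(x 3) := by
        rw [brA_apply']; simp (config := { decide := true }) [Pi.single_apply, dA]
      have e4 : c' * x 3 = c * x 2 := by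
        have := congrFun hveq 4
        simpa [Pi.smul_apply, smul_eq_mul, b04, b14] using this
      have e5 : c' * x 2 = c * (-(x 3)) := by
        have := congrFun hveq 5
        simpa [Pi.smul_apply, smul_eq_mul, b05, b15] using this
      have k2 : (c ^ 2 + c' ^ 2) * x 2 = 0 := by linear_combination c' * e5 - c * e4
      have k3 : (c ^ 2 + c' ^ 2) * x 3 = 0 := by linear_combination c' * e4 + c * e5
      have hcc : c = 0 ∧ c' = 0 := by
        have hsum : c ^ 2 + c' ^ 2 = 0 := by
          rcases not_and_or.mp h23 with h2 | h3
          · exact (mul_eq_zero.mp k2).resolve_right h2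
          · exact (mul_eq_zero.mp k3).resolve_right h3
        constructor <;> nlinarith [sq_nonneg c, sq_nonneg c']
      have hw0 : brA a x (Pi.single 0 1) = 0 := by
        apply hz
        rw [hw, hcc.1]
        funext i; simp
      exact h23 ⟨by rw [← b05, hw0]; rfl, by rw [← b04, hw0]; rfl⟩
  · -- x has nonzero component in span{e₁,e₂}: bracket with e₃, e₄
    obtain ⟨c, hc⟩ : ∃ c : ℝ, c = -((h (Pi.single 2 1)) 2) := ⟨_, rfl⟩
    obtain ⟨c', hc'⟩ : ∃ c' : ℝ, c' = -((h (Pi.single 3 1)) 2) := ⟨_, rfl⟩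
    have h26 : (h (Pi.single 2 1)) 6 = 0 := hfwd _ (by
      simp (config := { decide := true }) [Pi.single_apply])
    have h36 : (h (Pi.single 3 1)) 6 = 0 := hfwd _ (by
      simp (config := { decide := true }) [Pi.single_apply])
    have hw : h (brA a x (Pi.single 2 1))
        = fun i => c * (Pi.single (4:Fin 7) (1:ℝ) : Vn 7) i := by
      rw [hbr, hx, brG_single1 s _ h26, hc]
    have hw' : h (brA a x (Pi.single 3 1))
        = fun i => c' * (Pi.single (4:Fin 7) (1:ℝ) : Vn 7) i := by
      rw [hbr, hx, brG_single1 s _ h36, hc']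
    have hcomb : c' • brA a x (Pi.single 2 1) - c • brA a x (Pi.single 3 1) = 0 := by
      apply hz
      rw [map_sub, map_smul, map_smul, hw, hw']
      funext i
      simp only [Pi.sub_apply, Pi.smul_apply, smul_eq_mul, Pi.zero_apply]
      ring
    have hveq : c' • brA a x (Pi.single 2 1) = c • brA a x (Pi.single 3 1) :=
      sub_eq_zero.mp hcomb
    have b24 : brA a x (Pi.single 2 1) 4 = -(x 1) := by
      rw [brA_apply']; simp (config := { decide := true }) [Pi.single_apply, dA]
    have b25 : brA a x (Pi.single 2 1) 5 = -(x 0) := by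
      rw [brA_apply']; simp (config := { decide := true }) [Pi.single_apply, dA]
    have b34 : brA a x (Pi.single 3 1) 4 = -(x 0) := by
      rw [brA_apply']; simp (config := { decide := true }) [Pi.single_apply, dA]
    have b35 : brA a x (Pi.single 3 1) 5 = x 1 := by
      rw [brA_apply']; simp (config := { decide := true }) [Pi.single_apply, dA]
    have e4 : c' * (-(x 1)) = c * (-(x 0)) := by
      have := congrFun hveq 4
      simpa [Pi.smul_apply, smul_eq_mul, b24, b34] using this
    have e5 : c' * (-(x 0)) = c * x 1 := by
      have := congrFun hveq 5
      simpa [Pi.smul_apply, smul_eq_mul, b25, b35] using this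
    have k0 : (c ^ 2 + c' ^ 2) * x 0 = 0 := by linear_combination (-c') * e5 + c * e4
    have k1 : (c ^ 2 + c' ^ 2) * x 1 = 0 := by linear_combination (-c') * e4 - c * e5
    have hcc : c = 0 ∧ c' = 0 := by
      have hsum : c ^ 2 + c' ^ 2 = 0 := by
        rcases not_and_or.mp h01 with h0 | h1
        · exact (mul_eq_zero.mp k0).resolve_right h0
        · exact (mul_eq_zero.mp k1).resolve_right h1
      constructor <;> nlinarith [sq_nonneg c, sq_nonneg c']
    have hw0 : brA a x (Pi.single 2 1) = 0 := by
      apply hz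
      rw [hw, hcc.1]
      funext i; simp
    refine h01 ⟨?_, ?_⟩
    · have := congrFun hw0 5
      rw [b25] at this
      simpa using this
    · have := congrFun hw0 4
      rw [b24] at this
      simpa using this
end
end

section
/- The steady Laplacian soliton (G_{√15/8}, φ) is not extremally Ricci pinched: with s = √15/8, τ := (5−√15)/4·e¹² + (5+√15)/4·e³⁴ − (5/2)·e⁵⁶ (so |τ|² = 45/4), and dτ the Chevalley–Eilenberg differential of τ on g_{√15/8}, there exists an alternating 3-form β on ℝ⁷ (for instance β = e²⁴⁵) such that 6·⟨β, dτ⟩·e¹²³⁴⁵⁶⁷ ≠ (45/4)·⟨β, φ⟩·e¹²³⁴⁵⁶⁷ + β ∧ τ ∧ τ. (This condition for all β is equivalent to the ERP equation dτ = (1/6)|τ|²φ + (1/6)∗(τ∧τ), since γ ∧ ω = ⟨γ, ∗ω⟩ e¹²³⁴⁵⁶⁷ for a 3-form γ and 4-form ω.) -/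
open scoped BigOperators

noncomputable section

/-! ### Auxiliary machinery for the proof -/

section NotERPAux

open Equiv

-- pointwise formula for the wedge
lemma wedge_apply_eq {n p q : ℕ} (α : AltForm n p) (β : AltForm n q) (v : Fin (p+q) → Vn n) :
    wedge α β v = LinearMap.mul' ℝ ℝ ((α.domCoprod β) (v ∘ finSumFinEquiv)) := rfl

lemma domCoprod_add_right {n p q : ℕ} (α : AltForm n p) (β γ : AltForm n q) :
    α.domCoprod (β + γ) = α.domCoprod β + α.domCoprod γ := by
  rw [← AlternatingMap.domCoprod'_apply, ← AlternatingMap.domCoprod'_apply,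
    ← AlternatingMap.domCoprod'_apply, ← map_add, ← TensorProduct.tmul_add]

lemma domCoprod_smul_right {n p q : ℕ} (c : ℝ) (α : AltForm n p) (β : AltForm n q) :
    α.domCoprod (c • β) = c • α.domCoprod β := by
  rw [← AlternatingMap.domCoprod'_apply, ← AlternatingMap.domCoprod'_apply,
    ← map_smul, ← TensorProduct.tmul_smul]

lemma domCoprod_add_left {n p q : ℕ} (α β : AltForm n p) (γ : AltForm n q) :
    (α + β).domCoprod γ = α.domCoprod γ + β.domCoprod γ := by
  rw [← AlternatingMap.domCoprod'_apply, ← AlternatingMap.domCoprod'_apply,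
    ← AlternatingMap.domCoprod'_apply, ← map_add, ← TensorProduct.add_tmul]

lemma domCoprod_smul_left {n p q : ℕ} (c : ℝ) (α : AltForm n p) (β : AltForm n q) :
    (c • α).domCoprod β = c • α.domCoprod β := by
  rw [← AlternatingMap.domCoprod'_apply, ← AlternatingMap.domCoprod'_apply,
    ← map_smul, ← TensorProduct.smul_tmul']

lemma wedge_add_right {n p q : ℕ} (α : AltForm n p) (β γ : AltForm n q) :
    wedge α (β + γ) = wedge α β + wedge α γ := by
  ext v
  rw [AlternatingMap.add_apply]
  simp [wedge_apply_eq, domCoprod_add_right]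

lemma wedge_smul_right {n p q : ℕ} (c : ℝ) (α : AltForm n p) (β : AltForm n q) :
    wedge α (c • β) = c • wedge α β := by
  ext v
  rw [AlternatingMap.smul_apply]
  simp [wedge_apply_eq, domCoprod_smul_right]

lemma wedge_add_left_apply {n p q : ℕ} (α β : AltForm n p) (γ : AltForm n q)
    (v : Fin (p+q) → Vn n) :
    wedge (α + β) γ v = wedge α γ v + wedge β γ v := by
  simp [wedge_apply_eq, domCoprod_add_left]

lemma wedge_smul_left_apply {n p q : ℕ} (c : ℝ) (α : AltForm n p) (β : AltForm n q)
    (v : Fin (p+q) → Vn n) :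
    wedge (c • α) β v = c * wedge α β v := by
  simp [wedge_apply_eq, domCoprod_smul_left]

/-- `α` is given by the determinant of the matrix of values of the functionals `F`. -/
def IsDet {n k : ℕ} (α : AltForm n k) (F : Fin k → (Vn n →ₗ[ℝ] ℝ)) : Prop :=
  ∀ v, α v = Matrix.det (Matrix.of fun a b => F a (v b))

lemma sq_sign (u : ℤˣ) : ((u : ℤ) : ℝ) * ((u : ℤ) : ℝ) = 1 := by
  rcases Int.units_eq_one_or u with h | h <;> simp [h]

lemma perm_sum_core {p q : ℕ} (A : Fin p → (Fin p ⊕ Fin q) → ℝ) (B : Fin q → (Fin p ⊕ Fin q) → ℝ) :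
    ∑ σ : Perm (Fin p ⊕ Fin q), ((Perm.sign σ : ℤ) : ℝ) *
        ((∑ π : Perm (Fin p), ((Perm.sign π : ℤ) : ℝ) * ∏ b, A (π b) (σ (Sum.inl b))) *
          (∑ ρ : Perm (Fin q), ((Perm.sign ρ : ℤ) : ℝ) * ∏ b, B (ρ b) (σ (Sum.inr b))))
    = (p.factorial * q.factorial : ℝ) *
        ∑ τ : Perm (Fin p ⊕ Fin q), ((Perm.sign τ : ℤ) : ℝ) *
          ((∏ a, A a (τ (Sum.inl a))) * ∏ b, B b (τ (Sum.inr b))) := by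
  have hinner : ∀ (π : Perm (Fin p)) (ρ : Perm (Fin q)),
      (∑ σ : Perm (Fin p ⊕ Fin q), ((Perm.sign σ : ℤ) : ℝ) *
        ((((Perm.sign π : ℤ) : ℝ) * ∏ b, A (π b) (σ (Sum.inl b))) *
          (((Perm.sign ρ : ℤ) : ℝ) * ∏ b, B (ρ b) (σ (Sum.inr b)))))
      = ∑ τ : Perm (Fin p ⊕ Fin q), ((Perm.sign τ : ℤ) : ℝ) *
          ((∏ a, A a (τ (Sum.inl a))) * ∏ b, B b (τ (Sum.inr b))) := by
    intro π ρ
    set c : Perm (Fin p ⊕ Fin q) := Equiv.sumCongr π ρ with hc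
    rw [← Equiv.sum_comp (Equiv.mulRight c)
      (fun σ => ((Perm.sign σ : ℤ) : ℝ) *
        ((((Perm.sign π : ℤ) : ℝ) * ∏ b, A (π b) (σ (Sum.inl b))) *
          (((Perm.sign ρ : ℤ) : ℝ) * ∏ b, B (ρ b) (σ (Sum.inr b)))))]
    refine Finset.sum_congr rfl fun τ _ => ?_
    have h1 : ∀ b, (Equiv.mulRight c τ) (Sum.inl b) = τ (Sum.inl (π b)) := by
      intro b; simp [hc, Equiv.Perm.mul_apply]
    have h2 : ∀ b, (Equiv.mulRight c τ) (Sum.inr b) = τ (Sum.inr (ρ b)) := by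
      intro b; simp [hc, Equiv.Perm.mul_apply]
    have hA : (∏ b, A (π b) ((Equiv.mulRight c τ) (Sum.inl b))) = ∏ a, A a (τ (Sum.inl a)) := by
      simp_rw [h1]
      exact Equiv.prod_comp π (fun a => A a (τ (Sum.inl a)))
    have hB : (∏ b, B (ρ b) ((Equiv.mulRight c τ) (Sum.inr b))) = ∏ b, B b (τ (Sum.inr b)) := by
      simp_rw [h2]
      exact Equiv.prod_comp ρ (fun b => B b (τ (Sum.inr b)))
    rw [hA, hB]
    have hs : ((Perm.sign (Equiv.mulRight c τ) : ℤ) : ℝ)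
        = ((Perm.sign τ : ℤ) : ℝ) * (((Perm.sign π : ℤ) : ℝ) * ((Perm.sign ρ : ℤ) : ℝ)) := by
      have : Equiv.mulRight c τ = τ * c := rfl
      rw [this, Equiv.Perm.sign_mul, hc, Equiv.Perm.sign_sumCongr]
      push_cast
      ring
    rw [hs]
    have h3 := sq_sign (Perm.sign π)
    have h4 := sq_sign (Perm.sign ρ)
    linear_combination (((Perm.sign τ : ℤ) : ℝ) * ((∏ a, A a (τ (Sum.inl a))) * ∏ b, B b (τ (Sum.inr b))) * (((Perm.sign π : ℤ) : ℝ) * ((Perm.sign π : ℤ) : ℝ))) * h4 + (((Perm.sign τ : ℤ) : ℝ) * ((∏ a, A a (τ (Sum.inl a))) * ∏ b, B b (τ (Sum.inr b)))) * h3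
  calc
    ∑ σ : Perm (Fin p ⊕ Fin q), ((Perm.sign σ : ℤ) : ℝ) *
        ((∑ π : Perm (Fin p), ((Perm.sign π : ℤ) : ℝ) * ∏ b, A (π b) (σ (Sum.inl b))) *
          (∑ ρ : Perm (Fin q), ((Perm.sign ρ : ℤ) : ℝ) * ∏ b, B (ρ b) (σ (Sum.inr b))))
      = ∑ π : Perm (Fin p), ∑ ρ : Perm (Fin q), ∑ σ : Perm (Fin p ⊕ Fin q),
          ((Perm.sign σ : ℤ) : ℝ) *
            ((((Perm.sign π : ℤ) : ℝ) * ∏ b, A (π b) (σ (Sum.inl b))) *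
              (((Perm.sign ρ : ℤ) : ℝ) * ∏ b, B (ρ b) (σ (Sum.inr b)))) := by
        simp_rw [Finset.sum_mul_sum, Finset.mul_sum]
        rw [Finset.sum_comm]
        refine Finset.sum_congr rfl fun π _ => ?_
        rw [Finset.sum_comm]
    _ = ∑ _π : Perm (Fin p), ∑ _ρ : Perm (Fin q),
          ∑ τ : Perm (Fin p ⊕ Fin q), ((Perm.sign τ : ℤ) : ℝ) *
            ((∏ a, A a (τ (Sum.inl a))) * ∏ b, B b (τ (Sum.inr b))) := by
        refine Finset.sum_congr rfl fun π _ => Finset.sum_congr rfl fun ρ _ => hinner π ρ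
    _ = (p.factorial * q.factorial : ℝ) *
          ∑ τ : Perm (Fin p ⊕ Fin q), ((Perm.sign τ : ℤ) : ℝ) *
            ((∏ a, A a (τ (Sum.inl a))) * ∏ b, B b (τ (Sum.inr b))) := by
        rw [Finset.sum_const, Finset.sum_const, Finset.card_univ, Finset.card_univ,
          Fintype.card_perm, Fintype.card_perm, Fintype.card_fin, Fintype.card_fin,
          smul_smul, nsmul_eq_mul]
        push_cast
        ring

lemma isDet_wedge {n p q : ℕ} {α : AltForm n p} {β : AltForm n q}
    {F : Fin p → (Vn n →ₗ[ℝ] ℝ)} {G : Fin q → (Vn n →ₗ[ℝ] ℝ)}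
    (hα : IsDet α F) (hβ : IsDet β G) :
    IsDet (wedge α β) (fun s => Sum.elim F G (finSumFinEquiv.symm s)) := by
  intro v
  set w : Fin p ⊕ Fin q → Vn n := v ∘ finSumFinEquiv with hw
  have hR : Matrix.det (Matrix.of fun a b => Sum.elim F G (finSumFinEquiv.symm a) (v b))
      = Matrix.det (Matrix.of fun x y => Sum.elim F G x (w y)) := by
    rw [← Matrix.det_submatrix_equiv_self finSumFinEquiv]
    congr 1
    ext x y
    simp [Matrix.submatrix, hw]
  rw [hR]
  have hdet : Matrix.det (Matrix.of fun x y => Sum.elim F G x (w y))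
      = ∑ τ : Perm (Fin p ⊕ Fin q), ((Perm.sign τ : ℤ) : ℝ) *
          ((∏ a : Fin p, F a (w (τ (Sum.inl a)))) * ∏ b : Fin q, G b (w (τ (Sum.inr b)))) := by
    rw [← Matrix.det_transpose, Matrix.det_apply']
    refine Finset.sum_congr rfl fun τ _ => ?_
    rw [Fintype.prod_sum_type]
    simp [Matrix.transpose_apply]
  rw [hdet]
  have key := MultilinearMap.domCoprod_alternization_eq α β
  have key2 := congrArg (fun m => LinearMap.mul' ℝ ℝ (m w)) key
  simp only [MultilinearMap.alternatization_apply, AlternatingMap.smul_apply,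
    MultilinearMap.domDomCongr_apply, MultilinearMap.domCoprod_apply,
    AlternatingMap.coe_multilinearMap, map_sum] at key2
  simp only [Units.smul_def, map_zsmul, map_nsmul, LinearMap.mul'_apply,
    Fintype.card_fin] at key2
  simp only [zsmul_eq_mul, nsmul_eq_mul] at key2
  rw [wedge_apply_eq]
  have hval : ∀ x : Perm (Fin p ⊕ Fin q),
      (α fun i => w (x (Sum.inl i))) * (β fun i => w (x (Sum.inr i)))
      = (∑ π : Perm (Fin p), ((Perm.sign π : ℤ) : ℝ) * ∏ b, F (π b) (w (x (Sum.inl b)))) *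
        (∑ ρ : Perm (Fin q), ((Perm.sign ρ : ℤ) : ℝ) * ∏ b, G (ρ b) (w (x (Sum.inr b)))) := by
    intro x
    rw [hα, hβ, Matrix.det_apply', Matrix.det_apply']
    simp [Matrix.of_apply]
  simp only [hval] at key2
  rw [perm_sum_core (fun a s => F a (w s)) (fun b s => G b (w s))] at key2
  have hfac : ((p.factorial : ℝ) * (q.factorial : ℝ)) ≠ 0 := by positivity
  refine mul_left_cancel₀ hfac ?_
  push_cast at key2
  rw [← hw]
  exact key2.symm

lemma isDet_congr {n k : ℕ} {α : AltForm n k} {F G : Fin k → (Vn n →ₗ[ℝ] ℝ)}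
    (h : IsDet α F) (hFG : ∀ a, F a = G a) : IsDet α G := by
  have : F = G := funext hFG
  exact this ▸ h

abbrev pj (i : Fin 7) : Vn 7 →ₗ[ℝ] ℝ := LinearMap.proj i

lemma isDet_ef (i : Fin 7) : IsDet (ef i) ![pj i] := by
  intro v
  rw [Matrix.det_fin_one]
  simp [ef, oneForm, AlternatingMap.ofSubsingleton, Matrix.of_apply]

lemma isDet_w2 (i j : Fin 7) : IsDet (w2 i j) ![pj i, pj j] :=
  isDet_congr (isDet_wedge (isDet_ef i) (isDet_ef j)) (by intro a; fin_cases a <;> rfl)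

lemma isDet_w3 (i j k : Fin 7) : IsDet (w3 i j k) ![pj i, pj j, pj k] :=
  isDet_congr (isDet_wedge (isDet_w2 i j) (isDet_ef k)) (by intro a; fin_cases a <;> rfl)

lemma isDet_w4 (i j k l : Fin 7) : IsDet (w4 i j k l) ![pj i, pj j, pj k, pj l] :=
  isDet_congr (isDet_wedge (isDet_w3 i j k) (isDet_ef l)) (by intro a; fin_cases a <;> rfl)

lemma isDet_w5 (i j k l m : Fin 7) : IsDet (w5 i j k l m) ![pj i, pj j, pj k, pj l, pj m] :=
  isDet_congr (isDet_wedge (isDet_w4 i j k l) (isDet_ef m)) (by intro a; fin_cases a <;> rfl)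

lemma isDet_vol7 : IsDet vol7 ![pj 0, pj 1, pj 2, pj 3, pj 4, pj 5, pj 6] :=
  isDet_congr (isDet_wedge (isDet_wedge (isDet_w5 0 1 2 3 4) (isDet_ef 5)) (isDet_ef 6))
    (by intro a; fin_cases a <;> rfl)

lemma isDet_w3w2w2 (a b c i j k l : Fin 7) :
    IsDet (wedge (wedge (w3 a b c) (w2 i j)) (w2 k l))
      ![pj a, pj b, pj c, pj i, pj j, pj k, pj l] :=
  isDet_congr (isDet_wedge (isDet_wedge (isDet_w3 a b c) (isDet_w2 i j)) (isDet_w2 k l))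
    (by intro s; fin_cases s <;> rfl)

lemma isDet_dup {n k : ℕ} {α : AltForm n k} {F : Fin k → (Vn n →ₗ[ℝ] ℝ)}
    (h : IsDet α F) (a a' : Fin k) (hne : a ≠ a') (heq : F a = F a') (v : Fin k → Vn n) :
    α v = 0 := by
  rw [h]
  refine Matrix.det_zero_of_row_eq hne ?_
  ext b
  simp [Matrix.of_apply, heq]

lemma w3_apply (i j k : Fin 7) (v : Fin 3 → Vn 7) :
    w3 i j k v = v 0 i * v 1 j * v 2 k - v 0 i * v 2 j * v 1 k - v 1 i * v 0 j * v 2 k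
      + v 1 i * v 2 j * v 0 k + v 2 i * v 0 j * v 1 k - v 2 i * v 1 j * v 0 k := by
  rw [isDet_w3 i j k v, Matrix.det_fin_three]
  simp only [Matrix.of_apply, Matrix.cons_val', Matrix.cons_val_zero, Matrix.cons_val_one,
    Matrix.head_cons, Matrix.cons_val_two, Matrix.tail_cons, Matrix.empty_val',
    Matrix.cons_val_fin_one, LinearMap.proj_apply]

lemma dAt_zero {k : ℕ} (br : Vn 7 → Vn 7 → Vn 7) (α : AltForm 7 (k + 1))
    (v : Fin (k + 2) → Vn 7) (h : ∀ i j, br (v i) (v j) = 0) :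
    dAt br α v = 0 := by
  rw [dAt]
  refine Finset.sum_eq_zero fun j _ => Finset.sum_eq_zero fun i _ => ?_
  split
  · rw [h, AlternatingMap.map_coord_zero α 0 (by simp), mul_zero]
  · rfl

lemma brG_single_zero (s : ℝ) {x y : Fin 7}
    (hx : x = 1 ∨ x = 3 ∨ x = 4) (hy : y = 1 ∨ y = 3 ∨ y = 4) :
    brG s (Pi.single x 1) (Pi.single y 1) = 0 := by
  rcases hx with rfl | rfl | rfl <;> rcases hy with rfl | rfl | rfl <;>
    · funext i
      simp [brG, dS, Pi.single_apply]

lemma trich : ∀ x : Fin 7, x = 1 ∨ x = 3 ∨ x = 4 ∨ (¬(1 = x) ∧ ¬(3 = x) ∧ ¬(4 = x)) := by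
  decide

lemma funext3 (v : Fin 3 → Fin 7) (a b c : Fin 7) (h0 : v 0 = a) (h1 : v 1 = b)
    (h2 : v 2 = c) : v = ![a, b, c] := by
  funext m
  fin_cases m <;> simpa

end NotERPAux

set_option maxHeartbeats 2000000 in
set_option maxRecDepth 4000 in
set_option maxHeartbeats 2000000 in
set_option maxRecDepth 4000 in
/-- The steady Laplacian soliton `(G_{√15/8}, φ)` is not extremally
Ricci pinched: with `τ = (5-√15)/4 e¹² + (5+√15)/4 e³⁴ - (5/2) e⁵⁶` (so `|τ|² = 45/4`)
and `ρ = dτ` the Chevalley–Eilenberg differential of `τ` on `g_{√15/8}`, there is an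
alternating `3`-form `β` on `ℝ⁷` with
`6⟨β, dτ⟩ e¹²³⁴⁵⁶⁷ ≠ (45/4)⟨β, φ⟩ e¹²³⁴⁵⁶⁷ + β ∧ τ ∧ τ`; equivalently, the ERP equation
`dτ = (1/6)|τ|²φ + (1/6)∗(τ∧τ)` fails. -/
theorem gs_steady_soliton_not_ERP :
    ∀ ρ : AltForm 7 3,
      (∀ v : Fin 3 → Vn 7, ρ v = dAt (brG (Real.sqrt 15 / 8)) (tauS (Real.sqrt 15 / 8)) v) →
      ∃ β : AltForm 7 3,
        (6 * formInner β ρ) • vol7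
          ≠ (45 / 4 * formInner β phiG2) • vol7
            + wedge (wedge β (tauS (Real.sqrt 15 / 8))) (tauS (Real.sqrt 15 / 8)) := by
  classical
  intro r hr
  refine ⟨w3 1 3 4, fun heq => ?_⟩
  set bt : Fin 7 → Vn 7 := fun i => Pi.single i 1 with hbtdef
  -- volume form at the basis tuple
  have hvol : vol7 bt = 1 := by
    rw [isDet_vol7 bt]
    have hfam : (![pj 0, pj 1, pj 2, pj 3, pj 4, pj 5, pj 6] : Fin 7 → (Vn 7 →ₗ[ℝ] ℝ))
        = fun a => pj a := by
      funext a; fin_cases a <;> rfl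
    have hm : (Matrix.of fun a b =>
        (![pj 0, pj 1, pj 2, pj 3, pj 4, pj 5, pj 6] : Fin 7 → (Vn 7 →ₗ[ℝ] ℝ)) a (bt b))
        = (1 : Matrix (Fin 7) (Fin 7) ℝ) := by
      ext a b
      rw [hfam]
      simp [hbtdef, Matrix.one_apply, Pi.single_apply]
    rw [hm, Matrix.det_one]
  -- the β ∧ τ ∧ τ term vanishes at the basis tuple
  have e1 : ∀ k l : Fin 7, wedge (wedge (w3 1 3 4) (w2 0 1)) (w2 k l) bt = 0 :=
    fun k l => isDet_dup (isDet_w3w2w2 1 3 4 0 1 k l) 0 4 (by decide) rfl bt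
  have e2 : ∀ k l : Fin 7, wedge (wedge (w3 1 3 4) (w2 2 3)) (w2 k l) bt = 0 :=
    fun k l => isDet_dup (isDet_w3w2w2 1 3 4 2 3 k l) 1 4 (by decide) rfl bt
  have e3 : ∀ k l : Fin 7, wedge (wedge (w3 1 3 4) (w2 4 5)) (w2 k l) bt = 0 :=
    fun k l => isDet_dup (isDet_w3w2w2 1 3 4 4 5 k l) 2 3 (by decide) rfl bt
  have hW : wedge (wedge (w3 1 3 4) (tauS (Real.sqrt 15 / 8))) (tauS (Real.sqrt 15 / 8)) bt
      = 0 := by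
    set a1 : ℝ := (5 - 8 * (Real.sqrt 15 / 8)) / 4 with ha1
    set a2 : ℝ := (5 + 8 * (Real.sqrt 15 / 8)) / 4 with ha2
    set a3 : ℝ := ((-(5 / 2) : ℤ) : ℝ) with ha3
    rw [show tauS (Real.sqrt 15 / 8) = a1 • w2 0 1 + a2 • w2 2 3 + a3 • w2 4 5 by
      rw [tauS, ha1, ha2, ha3, Int.cast_smul_eq_zsmul ℝ (-(5 / 2)) (w2 4 5)]]
    simp only [wedge_add_right, wedge_smul_right, AlternatingMap.add_apply,
      AlternatingMap.smul_apply, smul_eq_mul, wedge_add_left_apply, wedge_smul_left_apply,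
      e1, e2, e3, mul_zero, add_zero, zero_add]
  -- ⟨β, dτ⟩ = 0
  have hc1 : formInner (w3 1 3 4) r = 0 := by
    rw [formInner]
    have hsum : (∑ v : Fin 3 → Fin 7,
        w3 1 3 4 (fun m => Pi.single (v m) (1 : ℝ)) * r (fun m => Pi.single (v m) (1 : ℝ)))
        = 0 := by
      have hbrall : ∀ (v : Fin 3 → Fin 7), (v 0 = 1 ∨ v 0 = 3 ∨ v 0 = 4) →
          (v 1 = 1 ∨ v 1 = 3 ∨ v 1 = 4) → (v 2 = 1 ∨ v 2 = 3 ∨ v 2 = 4) →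
          ∀ i j : Fin 3, brG (Real.sqrt 15 / 8)
            ((fun m => (Pi.single (v m) (1 : ℝ) : Vn 7)) i)
            ((fun m => (Pi.single (v m) (1 : ℝ) : Vn 7)) j) = 0 := by
        intro v hv0 hv1 hv2 i j
        have hmem : ∀ m : Fin 3, v m = 1 ∨ v m = 3 ∨ v m = 4 := by
          intro m; fin_cases m <;> assumption
        exact brG_single_zero _ (hmem i) (hmem j)
      refine Finset.sum_eq_zero fun v _ => ?_
      rcases trich (v 0) with h0 | h0 | h0 | h0 <;>
        rcases trich (v 1) with h1 | h1 | h1 | h1 <;>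
          rcases trich (v 2) with h2 | h2 | h2 | h2 <;>
            first
            | (rw [hr, dAt_zero _ _ _ (hbrall v
                  (by first | exact Or.inl h0 | exact Or.inr (Or.inl h0) | exact Or.inr (Or.inr h0))
                  (by first | exact Or.inl h1 | exact Or.inr (Or.inl h1) | exact Or.inr (Or.inr h1))
                  (by first | exact Or.inl h2 | exact Or.inr (Or.inl h2) | exact Or.inr (Or.inr h2))),
                mul_zero])
            | (have hb : w3 1 3 4 (fun m => Pi.single (v m) (1 : ℝ)) = 0 := by
                rw [w3_apply]
                simp [Pi.single_apply, h0, h1, h2]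
               rw [hb, zero_mul])
    rw [hsum, mul_zero]
  -- ⟨β, φ⟩ = -1
  have hc2 : formInner (w3 1 3 4) phiG2 = -1 := by
    rw [formInner]
    have hsub : ({![1,3,4], ![1,4,3], ![3,1,4], ![3,4,1], ![4,1,3], ![4,3,1]} :
        Finset (Fin 3 → Fin 7)) ⊆ Finset.univ := Finset.subset_univ _
    have hvan : ∀ v ∈ (Finset.univ : Finset (Fin 3 → Fin 7)),
        v ∉ ({![1,3,4], ![1,4,3], ![3,1,4], ![3,4,1], ![4,1,3], ![4,3,1]} :
          Finset (Fin 3 → Fin 7)) →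
        w3 1 3 4 (fun m => Pi.single (v m) (1 : ℝ)) * phiG2 (fun m => Pi.single (v m) (1 : ℝ))
          = 0 := by
      intro v _ hv
      rcases trich (v 0) with h0 | h0 | h0 | h0 <;>
        rcases trich (v 1) with h1 | h1 | h1 | h1 <;>
          rcases trich (v 2) with h2 | h2 | h2 | h2 <;>
            first
            | (exact absurd (by rw [funext3 v _ _ _ h0 h1 h2]; decide) hv)
            | (have hb : w3 1 3 4 (fun m => Pi.single (v m) (1 : ℝ)) = 0 := by
                rw [w3_apply]
                simp [Pi.single_apply, h0, h1, h2]
               rw [hb, zero_mul])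
    rw [← Finset.sum_subset hsub hvan]
    rw [show ({![1,3,4], ![1,4,3], ![3,1,4], ![3,4,1], ![4,1,3], ![4,3,1]} :
        Finset (Fin 3 → Fin 7)) = insert ![1,3,4] (insert ![1,4,3] (insert ![3,1,4]
          (insert ![3,4,1] (insert ![4,1,3] {![4,3,1]})))) from rfl]
    rw [Finset.sum_insert (by decide), Finset.sum_insert (by decide),
      Finset.sum_insert (by decide), Finset.sum_insert (by decide),
      Finset.sum_insert (by decide), Finset.sum_singleton]
    simp only [phiG2, AlternatingMap.add_apply, AlternatingMap.sub_apply, w3_apply]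
    simp [Pi.single_apply]
    norm_num [Nat.factorial]
  -- evaluate the hypothesized equality at the basis tuple
  have happ := congrArg (fun F : AltForm 7 7 => F bt) heq
  simp only [AlternatingMap.smul_apply, AlternatingMap.add_apply, smul_eq_mul] at happ
  rw [hc1, hc2, hvol, hW] at happ
  norm_num at happ
end
end
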